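/- arXiv:2212.14700 — 6 statements merged into one kernel-verified Lean document; each statement's English description precedes it below -/
import Mathlib

section
/- Let $\rho$ be a positive semidefinite matrix on $\mathbb{C}^d$ and let $E_1, \dots, E_k$ be mutually orthogonal projections with $\sum_{i=1}^k E_i = I$. Then $\rho \leq k \sum_{i=1}^k E_i \rho E_i$ (Hayashi's pinching inequality). -/
open ComplexOrder Matrix Finset

private lemma psd_add {n : ℕ} {A B : Matrix (Fin n) (Fin n) ℂ}
    (hA : A.PosSemidef) (hB : B.PosSemidef) : (A + B).PosSemidef :=
  ⟨hA.1.add hB.1, fun x => by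
    exact (hA.add hB).2 x⟩

private lemma psd_sum {n : ℕ} {ι : Type*} (s : Finset ι) (M : ι → Matrix (Fin n) (Fin n) ℂ)
    (h : ∀ i ∈ s, (M i).PosSemidef) : (∑ i ∈ s, M i).PosSemidef := by
  classical
  induction s using Finset.induction with
  | empty => simpa using Matrix.PosSemidef.zero
  | insert _ _ hx ih =>
    rw [Finset.sum_insert hx]
    exact psd_add (h _ (Finset.mem_insert_self _ _))
      (ih fun i hi => h i (Finset.mem_insert_of_mem hi))

private lemma psd_half_smul {n : ℕ} {M : Matrix (Fin n) (Fin n) ℂ}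
    (hM : M.PosSemidef) : ((2 : ℂ)⁻¹ • M).PosSemidef := by
  constructor
  · unfold Matrix.IsHermitian
    rw [conjTranspose_smul, hM.1]
    norm_num
  · intro x
    exact (hM.smul (a := (2 : ℂ)⁻¹) (by rw [Complex.le_def]; norm_num)).2 x

private lemma key {d k : ℕ} (X : Fin k → Matrix (Fin d) (Fin d) ℂ) :
    Matrix.PosSemidef ((k : ℂ) • (∑ i, X i * (X i)ᴴ) - (∑ i, X i) * (∑ i, X i)ᴴ) := by
  have hS : (∑ i, ∑ j, (X i - X j) * (X i - X j)ᴴ).PosSemidef :=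
    psd_sum _ _ fun i _ => psd_sum _ _ fun j _ =>
      Matrix.posSemidef_self_mul_conjTranspose _
  have hid : (k : ℂ) • (∑ i, X i * (X i)ᴴ) - (∑ i, X i) * (∑ i, X i)ᴴ
      = (2 : ℂ)⁻¹ • (∑ i, ∑ j, (X i - X j) * (X i - X j)ᴴ) := by
    have expand : ∀ i j : Fin k, (X i - X j) * (X i - X j)ᴴ
        = X i * (X i)ᴴ - X i * (X j)ᴴ - X j * (X i)ᴴ + X j * (X j)ᴴ := by
      intro i j
      rw [conjTranspose_sub]
      noncomm_ring
    simp_rw [expand, Finset.sum_add_distrib, Finset.sum_sub_distrib, Finset.sum_const,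
      Finset.card_univ, Fintype.card_fin, ← Finset.mul_sum, ← Finset.sum_mul,
      ← conjTranspose_sum]
    rw [← Finset.smul_sum, ← Finset.mul_sum, ← conjTranspose_sum]
    rw [← Nat.cast_smul_eq_nsmul ℂ]
    module
  rw [hid]
  exact psd_half_smul hS

/-- Hayashi's pinching inequality: `ρ ≤ k • ∑ i, E i * ρ * E i` for a projective
measurement `E` with `k` outcomes. -/
theorem pinching_inequality {d k : ℕ} (ρ : Matrix (Fin d) (Fin d) ℂ)
    (hρ : ρ.PosSemidef)
    (E : Fin k → Matrix (Fin d) (Fin d) ℂ)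
    (hherm : ∀ i, (E i).IsHermitian)
    (hproj : ∀ i, E i * E i = E i)
    (horth : ∀ i j, i ≠ j → E i * E j = 0)
    (hsum : ∑ i, E i = 1) :
    Matrix.PosSemidef ((k : ℂ) • (∑ i, E i * ρ * E i) - ρ) := by
  open MatrixOrder in set B := CFC.sqrt ρ with hB
  have hBh : B.IsHermitian := by open MatrixOrder in exact (CFC.sqrt_nonneg ρ).posSemidef.1
  have hXX : ∀ i, (E i * B) * (E i * B)ᴴ = E i * ρ * E i := by
    intro i
    open MatrixOrder in rw [conjTranspose_mul, hBh.eq, (hherm i).eq, ← CFC.sqrt_mul_sqrt_self ρ hρ.nonneg]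
    noncomm_ring
  have hXsum : ∑ i, E i * B = B := by
    rw [← Finset.sum_mul, hsum, one_mul]
  have := key (fun i => E i * B)
  simp only [hXX, hXsum] at this
  rwa [show B * Bᴴ = ρ by open MatrixOrder in rw [hBh.eq, CFC.sqrt_mul_sqrt_self ρ hρ.nonneg]] at this
end

section
/- Let $\rho$ and $\sigma$ be positive semidefinite matrices on $\mathbb{C}^d$ with $\mathrm{tr}(\rho)=1$ and with the support of $\rho$ contained in the support of $\sigma$. Then $D_{\max}(\rho\|\sigma) = \log \sup \{ \mathrm{tr}(\rho X) : X \geq 0,\ \mathrm{tr}(\sigma X) \leq 1 \}$, where $D_{\max}(\rho\|\sigma)=\log\inf\{\lambda > 0 : \rho \leq \lambda\sigma\}$. -/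
open Matrix ComplexOrder

/-- Max relative entropy of matrices: `log₂ inf {λ > 0 : ρ ≤ λ σ}`. -/
noncomputable def Dmax {d : ℕ} (ρ σ : Matrix (Fin d) (Fin d) ℂ) : ℝ :=
  Real.logb 2 (sInf {l : ℝ | 0 < l ∧ (l • σ - ρ).PosSemidef})

variable {d : ℕ}


lemma trace_mul_outer (M : Matrix (Fin d) (Fin d) ℂ) (v : Fin d → ℂ) :
    (M * vecMulVec v (star v)).trace = star v ⬝ᵥ (M *ᵥ v) := by
  simp only [Matrix.trace, Matrix.diag, Matrix.mul_apply, vecMulVec_apply, Pi.star_apply,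
    dotProduct, mulVec, Finset.mul_sum]
  congr 1; ext i; congr 1; ext j; ring

lemma outer_psd (v : Fin d → ℂ) : (vecMulVec v (star v)).PosSemidef := by
  refine PosSemidef.of_dotProduct_mulVec_nonneg ?_ ?_
  · ext i j; simp [vecMulVec_apply, conjTranspose_apply, mul_comm]
  · intro x
    have : star x ⬝ᵥ (vecMulVec v (star v) *ᵥ x) = star (star v ⬝ᵥ x) * (star v ⬝ᵥ x) := by
      simp only [dotProduct, mulVec, vecMulVec_apply, Pi.star_apply, Finset.mul_sum,
        Finset.sum_mul, star_sum, star_mul', star_star]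
      rw [Finset.sum_comm]
      congr 1; ext j; congr 1; ext i; ring
    rw [this]
    exact star_mul_self_nonneg _

lemma trace_nonneg_of_psd {M : Matrix (Fin d) (Fin d) ℂ} (hM : M.PosSemidef) :
    0 ≤ M.trace := by
  apply Finset.sum_nonneg
  intro i _
  have := hM.dotProduct_mulVec_nonneg (Pi.single i 1)
  simpa [dotProduct, mulVec, Pi.single_apply] using this

lemma trace_mul_psd_nonneg {A B : Matrix (Fin d) (Fin d) ℂ} (hA : A.PosSemidef)
    (hB : B.PosSemidef) : 0 ≤ (A * B).trace := by
  obtain ⟨C, rfl⟩ : ∃ C : Matrix (Fin d) (Fin d) ℂ, A = Cᴴ * C := by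
    open scoped MatrixOrder Matrix.Norms.L2Operator in
    exact CStarAlgebra.nonneg_iff_eq_star_mul_self.mp hA.nonneg
  rw [Matrix.mul_assoc, trace_mul_comm]
  exact trace_nonneg_of_psd (hB.mul_mul_conjTranspose_same C)


lemma conj_quad (M : Matrix (Fin d) (Fin d) ℂ) (a b : Fin d → ℂ) :
    star (star a ⬝ᵥ (M *ᵥ b)) = star b ⬝ᵥ (Mᴴ *ᵥ a) := by
  simp only [dotProduct, mulVec, conjTranspose_apply, Pi.star_apply, star_sum, star_mul',
    star_star, Finset.mul_sum]
  rw [Finset.sum_comm]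
  congr 1; ext i; congr 1; ext j; ring

lemma quadform_im {M : Matrix (Fin d) (Fin d) ℂ} (hM : M.IsHermitian) (v : Fin d → ℂ) :
    (star v ⬝ᵥ (M *ᵥ v)).im = 0 := by
  have h := conj_quad M v v
  rw [hM.eq] at h
  exact Complex.conj_eq_iff_im.mp h

lemma sum_normSq_eq_dot (z : Fin d → ℂ) :
    star z ⬝ᵥ z = ((∑ i, Complex.normSq (z i) : ℝ) : ℂ) := by
  push_cast
  simp [dotProduct, Complex.normSq_eq_conj_mul_self]

lemma sum_normSq_star_unitary_mulVec (U : Matrix.unitaryGroup (Fin d) ℂ) (x : Fin d → ℂ) :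
    ∑ i, Complex.normSq ((star (U : Matrix (Fin d) (Fin d) ℂ) *ᵥ x) i)
      = ∑ i, Complex.normSq (x i) := by
  have h1 : star (star (U : Matrix (Fin d) (Fin d) ℂ) *ᵥ x)
      ⬝ᵥ (star (U : Matrix (Fin d) (Fin d) ℂ) *ᵥ x) = star x ⬝ᵥ x := by
    have hUU : (U : Matrix (Fin d) (Fin d) ℂ) * (U : Matrix (Fin d) (Fin d) ℂ)ᴴ = 1 := by
      have := Matrix.mem_unitaryGroup_iff.mp U.2
      simpa [star_eq_conjTranspose] using this
    rw [star_mulVec, star_eq_conjTranspose, conjTranspose_conjTranspose, ← dotProduct_mulVec,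
      mulVec_mulVec, hUU, one_mulVec]
  rw [sum_normSq_eq_dot, sum_normSq_eq_dot] at h1
  exact_mod_cast h1


lemma quadform_spectral {M : Matrix (Fin d) (Fin d) ℂ} (hM : M.IsHermitian) (v : Fin d → ℂ) :
    star v ⬝ᵥ (M *ᵥ v) = ∑ i, (hM.eigenvalues i : ℂ) *
      (Complex.normSq ((star (hM.eigenvectorUnitary : Matrix (Fin d) (Fin d) ℂ) *ᵥ v) i) : ℂ) := by
  set U : Matrix (Fin d) (Fin d) ℂ := (hM.eigenvectorUnitary : Matrix (Fin d) (Fin d) ℂ) with hU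
  set w : Fin d → ℂ := star U *ᵥ v with hw
  have hsw : star w = star v ᵥ* U := by
    rw [hw, star_mulVec, star_eq_conjTranspose, conjTranspose_conjTranspose]
  conv_lhs => rw [hM.spectral_theorem, Unitary.conjStarAlgAut_apply]
  rw [← mulVec_mulVec, ← mulVec_mulVec, dotProduct_mulVec, ← hsw, ← hw]
  simp only [dotProduct, mulVec_diagonal, Function.comp_apply, Pi.star_apply]
  congr 1; ext i
  rw [Complex.normSq_eq_conj_mul_self, Complex.star_def]
  rw [mul_left_comm]
  rfl

lemma trace_eq_sum_eig {M : Matrix (Fin d) (Fin d) ℂ} (hM : M.IsHermitian) :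
    M.trace = ∑ i, (hM.eigenvalues i : ℂ) := by
  conv_lhs => rw [hM.spectral_theorem, Unitary.conjStarAlgAut_apply]
  rw [Matrix.trace_mul_cycle, Unitary.coe_star_mul_self, Matrix.one_mul,
    trace_diagonal]
  simp

lemma quadform_spectral_re {M : Matrix (Fin d) (Fin d) ℂ} (hM : M.IsHermitian) (v : Fin d → ℂ) :
    (star v ⬝ᵥ (M *ᵥ v)).re = ∑ i, hM.eigenvalues i *
      Complex.normSq ((star (hM.eigenvectorUnitary : Matrix (Fin d) (Fin d) ℂ) *ᵥ v) i) := by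
  rw [quadform_spectral hM v]
  simp only [← Complex.ofReal_mul, ← Complex.ofReal_sum, Complex.ofReal_re]

lemma psd_sub_iff {ρ σ : Matrix (Fin d) (Fin d) ℂ} (hρ : ρ.PosSemidef) (hσ : σ.PosSemidef)
    (l : ℝ) : (l • σ - ρ).PosSemidef ↔
      ∀ v : Fin d → ℂ, (star v ⬝ᵥ (ρ *ᵥ v)).re ≤ l * (star v ⬝ᵥ (σ *ᵥ v)).re := by
  have hherm : (l • σ - ρ).IsHermitian := by
    have h1 : (l • σ).IsHermitian := by
      ext i j
      simp only [conjTranspose_apply, Matrix.smul_apply, star_smul, star_trivial]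
      congr 1
      have := congrFun (congrFun hσ.1 i) j
      simpa [conjTranspose_apply] using this
    exact h1.sub hρ.1
  have hexp : ∀ v : Fin d → ℂ, star v ⬝ᵥ ((l • σ - ρ) *ᵥ v)
      = l • (star v ⬝ᵥ (σ *ᵥ v)) - star v ⬝ᵥ (ρ *ᵥ v) := by
    intro v
    rw [Matrix.sub_mulVec, dotProduct_sub]
    congr 1
    rw [smul_mulVec, dotProduct_smul]
  constructor
  · intro h v
    have h2 := h.dotProduct_mulVec_nonneg v
    rw [hexp v, Complex.le_def] at h2
    have := h2.1
    simpa [Complex.real_smul, Complex.mul_re] using this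
  · intro h
    refine PosSemidef.of_dotProduct_mulVec_nonneg hherm fun v => ?_
    rw [hexp v, Complex.le_def]
    constructor
    · simpa [Complex.real_smul, Complex.mul_re] using h v
    · simp [Complex.real_smul, Complex.mul_im, quadform_im hρ.1, quadform_im hσ.1]

lemma exists_dom {ρ σ : Matrix (Fin d) (Fin d) ℂ}
    (hρ : ρ.PosSemidef) (hσ : σ.PosSemidef) (hρ1 : ρ.trace = 1)
    (hsupp : ∀ v, σ *ᵥ v = 0 → ρ *ᵥ v = 0) :
    ∃ l : ℝ, 0 < l ∧ ∀ v : Fin d → ℂ,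
      (star v ⬝ᵥ (ρ *ᵥ v)).re ≤ l * (star v ⬝ᵥ (σ *ᵥ v)).re := by
  have hd : 0 < d := by
    rcases Nat.eq_zero_or_pos d with h | h
    · subst h
      rw [show ρ.trace = 0 by simp [Matrix.trace]] at hρ1
      exact absurd hρ1 (by norm_num)
    · exact h
  haveI : NeZero d := ⟨hd.ne'⟩
  set μ : Fin d → ℝ := hσ.1.eigenvalues with hμ
  have hμ0 : ∀ i, 0 ≤ μ i := fun i => hσ.eigenvalues_nonneg i
  set g : Fin d → ℝ := fun i => if μ i = 0 then 1 else μ i with hg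
  have hgpos : ∀ i, 0 < g i := by
    intro i
    by_cases h : μ i = 0
    · simp [hg, h]
    · simp only [hg, if_neg h]
      exact lt_of_le_of_ne (hμ0 i) (Ne.symm h)
  set c : ℝ := Finset.univ.inf' Finset.univ_nonempty g with hc
  have hcpos : 0 < c := by
    rw [hc, Finset.lt_inf'_iff]
    exact fun i _ => hgpos i
  have hcle : ∀ i, μ i ≠ 0 → c ≤ μ i := by
    intro i hi
    have h2 := Finset.inf'_le g (Finset.mem_univ i)
    rw [← hc] at h2
    simpa [hg, hi] using h2
  refine ⟨c⁻¹, inv_pos.mpr hcpos, ?_⟩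
  intro v
  set U : Matrix (Fin d) (Fin d) ℂ := (hσ.1.eigenvectorUnitary : Matrix (Fin d) (Fin d) ℂ)
    with hU
  set w : Fin d → ℂ := star U *ᵥ v with hw
  set m : Fin d → ℂ := fun i => if μ i = 0 then 0 else w i with hm
  set u : Fin d → ℂ := U *ᵥ m with hu
  have hUu : star U *ᵥ u = m := by
    rw [hu, mulVec_mulVec, hU, Matrix.UnitaryGroup.star_mul_self, one_mulVec]
  have hσvu : σ *ᵥ (v - u) = 0 := by
    conv_lhs => rw [hσ.1.spectral_theorem, Unitary.conjStarAlgAut_apply]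
    rw [← hU, ← mulVec_mulVec, ← mulVec_mulVec, Matrix.mulVec_sub, ← hw, hUu]
    have hz : (diagonal (RCLike.ofReal ∘ hσ.1.eigenvalues) : Matrix (Fin d) (Fin d) ℂ)
        *ᵥ (w - m) = 0 := by
      funext i
      simp only [mulVec_diagonal, Function.comp_apply, Pi.sub_apply, Pi.zero_apply, hm]
      by_cases h : μ i = 0
      · simp only [if_pos h]
        have : hσ.1.eigenvalues i = (0:ℝ) := h
        rw [this]
        simp
      · simp [if_neg h]
    rw [hz, mulVec_zero]
  have hρvu : ρ *ᵥ (v - u) = 0 := hsupp _ hσvu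
  have hρv : ρ *ᵥ v = ρ *ᵥ u := by
    have h3 := hρvu
    rw [Matrix.mulVec_sub, sub_eq_zero] at h3
    exact h3
  have hq : star v ⬝ᵥ (ρ *ᵥ v) = star u ⬝ᵥ (ρ *ᵥ u) := by
    rw [hρv]
    have h0 : star (v - u) ⬝ᵥ (ρ *ᵥ u) = 0 := by
      have h1 := conj_quad ρ u (v - u)
      rw [hρvu, dotProduct_zero, star_zero, hρ.1.eq] at h1
      exact h1.symm
    have h2 : star (v - u) ⬝ᵥ (ρ *ᵥ u) = star v ⬝ᵥ (ρ *ᵥ u) - star u ⬝ᵥ (ρ *ᵥ u) := by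
      rw [star_sub, sub_dotProduct]
    rw [h0] at h2
    linear_combination -h2
  -- eigenvalues of ρ
  have hν0 : ∀ i, 0 ≤ hρ.1.eigenvalues i := fun i => hρ.eigenvalues_nonneg i
  have hνsum : ∑ i, hρ.1.eigenvalues i = 1 := by
    have h4 := trace_eq_sum_eig hρ.1
    rw [hρ1] at h4
    rw [← Complex.ofReal_sum] at h4
    exact_mod_cast h4.symm
  have hν1 : ∀ i, hρ.1.eigenvalues i ≤ 1 := by
    intro i
    rw [← hνsum]
    exact Finset.single_le_sum (fun j _ => hν0 j) (Finset.mem_univ i)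
  have hbound1 : (star u ⬝ᵥ (ρ *ᵥ u)).re ≤ ∑ i, Complex.normSq (u i) := by
    rw [quadform_spectral_re hρ.1 u]
    calc ∑ i, hρ.1.eigenvalues i *
          Complex.normSq ((star (hρ.1.eigenvectorUnitary : Matrix (Fin d) (Fin d) ℂ) *ᵥ u) i)
        ≤ ∑ i, Complex.normSq ((star (hρ.1.eigenvectorUnitary : Matrix (Fin d) (Fin d) ℂ) *ᵥ u) i) := by
          apply Finset.sum_le_sum
          intro i _
          nlinarith [hν1 i, hν0 i, Complex.normSq_nonneg
            ((star (hρ.1.eigenvectorUnitary : Matrix (Fin d) (Fin d) ℂ) *ᵥ u) i)]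
      _ = ∑ i, Complex.normSq (u i) := sum_normSq_star_unitary_mulVec hρ.1.eigenvectorUnitary u
  have humu : ∑ i, Complex.normSq (u i) = ∑ i, Complex.normSq (m i) := by
    have h6 := sum_normSq_star_unitary_mulVec hσ.1.eigenvectorUnitary u
    rw [show (star ((hσ.1.eigenvectorUnitary : Matrix (Fin d) (Fin d) ℂ)) *ᵥ u) = m from hUu]
      at h6
    exact h6.symm
  have hfinal : ∑ i, Complex.normSq (m i) ≤ c⁻¹ * (star v ⬝ᵥ (σ *ᵥ v)).re := by
    rw [quadform_spectral_re hσ.1 v, Finset.mul_sum]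
    apply Finset.sum_le_sum
    intro i _
    by_cases h : μ i = 0
    · simp only [hm, if_pos h]
      have : hσ.1.eigenvalues i = (0:ℝ) := h
      rw [this]
      simp
    · simp only [hm, if_neg h]
      have h1 : c ≤ μ i := hcle i h
      have h2 : 0 ≤ Complex.normSq (w i) := Complex.normSq_nonneg _
      have h7 : hσ.1.eigenvalues i = μ i := rfl
      rw [h7, ← hw]
      calc Complex.normSq (w i) = c⁻¹ * (c * Complex.normSq (w i)) := by
            field_simp
        _ ≤ c⁻¹ * (μ i * Complex.normSq (w i)) := by
            apply mul_le_mul_of_nonneg_left _ (inv_nonneg.mpr hcpos.le)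
            nlinarith
  calc (star v ⬝ᵥ (ρ *ᵥ v)).re = (star u ⬝ᵥ (ρ *ᵥ u)).re := by rw [hq]
    _ ≤ ∑ i, Complex.normSq (u i) := hbound1
    _ = ∑ i, Complex.normSq (m i) := humu
    _ ≤ c⁻¹ * (star v ⬝ᵥ (σ *ᵥ v)).re := hfinal

/-- Variational formula for the max relative entropy:
`D_max(ρ‖σ) = log sup { tr(ρX) : X ≥ 0, tr(σX) ≤ 1 }`. -/
theorem Dmax_eq_log_sSup {d : ℕ} (ρ σ : Matrix (Fin d) (Fin d) ℂ)
    (hρ : ρ.PosSemidef) (hσ : σ.PosSemidef) (hρ1 : ρ.trace = 1)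
    (hsupp : ∀ v, σ *ᵥ v = 0 → ρ *ᵥ v = 0) :
    Dmax ρ σ =
      Real.logb 2 (sSup {r : ℝ | ∃ X : Matrix (Fin d) (Fin d) ℂ,
        X.PosSemidef ∧ (σ * X).trace.re ≤ 1 ∧ r = (ρ * X).trace.re}) := by
  set A : Set ℝ := {l : ℝ | 0 < l ∧ (l • σ - ρ).PosSemidef} with hA
  set B : Set ℝ := {r : ℝ | ∃ X : Matrix (Fin d) (Fin d) ℂ,
    X.PosSemidef ∧ (σ * X).trace.re ≤ 1 ∧ r = (ρ * X).trace.re} with hB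
  have hDmax : Dmax ρ σ = Real.logb 2 (sInf A) := rfl
  rw [hDmax]
  suffices h : sInf A = sSup B by rw [h]
  obtain ⟨l0, hl0pos, hl0⟩ := exists_dom hρ hσ hρ1 hsupp
  have hl0A : l0 ∈ A := ⟨hl0pos, (psd_sub_iff hρ hσ l0).mpr hl0⟩
  have h0B : (0:ℝ) ∈ B := ⟨0, Matrix.PosSemidef.zero, by simp, by simp⟩
  have hub : ∀ l ∈ A, ∀ r ∈ B, r ≤ l := by
    rintro l ⟨hlpos, hlpsd⟩ r ⟨X, hX, hXσ, rfl⟩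
    have h1 : 0 ≤ ((l • σ - ρ) * X).trace := trace_mul_psd_nonneg hlpsd hX
    have h2 : ((l • σ - ρ) * X).trace = l • (σ * X).trace - (ρ * X).trace := by
      rw [Matrix.sub_mul, Matrix.smul_mul, trace_sub, trace_smul]
    rw [h2, Complex.le_def] at h1
    have h3 := h1.1
    simp only [Complex.sub_re, Complex.zero_re, Complex.real_smul, Complex.mul_re,
      Complex.ofReal_re, Complex.ofReal_im, zero_mul, sub_zero] at h3
    nlinarith [hXσ, hlpos.le]
  have hBbdd : BddAbove B := ⟨l0, fun r hr => hub l0 hl0A r hr⟩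
  have hAbdd : BddBelow A := ⟨0, fun x hx => hx.1.le⟩
  have h1 : sSup B ≤ sInf A :=
    le_csInf ⟨l0, hl0A⟩ fun l hl => csSup_le ⟨0, h0B⟩ fun r hr => hub l hl r hr
  have h2 : sInf A ≤ sSup B := by
    by_contra hcon
    push_neg at hcon
    obtain ⟨l, hl1, hl2⟩ := exists_between hcon
    have hlpos : 0 < l := lt_of_le_of_lt (le_csSup hBbdd h0B) hl1
    have hlnA : l ∉ A := notMem_of_lt_csInf hl2 hAbdd
    have hnot : ¬ (l • σ - ρ).PosSemidef := fun hpsd => hlnA ⟨hlpos, hpsd⟩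
    rw [psd_sub_iff hρ hσ] at hnot
    push_neg at hnot
    obtain ⟨v, hv⟩ := hnot
    have hσv0 : 0 < (star v ⬝ᵥ (σ *ᵥ v)).re := by
      have hnn : 0 ≤ (star v ⬝ᵥ (σ *ᵥ v)).re := by
        have := hσ.re_dotProduct_nonneg v
        simpa [RCLike.re_to_complex] using this
      rcases lt_or_eq_of_le hnn with h | h
      · exact h
      · exfalso
        have hz : star v ⬝ᵥ (σ *ᵥ v) = 0 := by
          apply Complex.ext
          · rw [← h]; simp
          · rw [quadform_im hσ.1]; simp
        have hρv0 := hsupp v ((hσ.dotProduct_mulVec_zero_iff v).mp hz)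
        have hre0 : (star v ⬝ᵥ (ρ *ᵥ v)).re = 0 := by rw [hρv0]; simp
        rw [hre0, ← h] at hv
        simp at hv
    set t : ℝ := ((star v ⬝ᵥ (σ *ᵥ v)).re)⁻¹ with ht
    have htpos : 0 < t := inv_pos.mpr hσv0
    set v' : Fin d → ℂ := ((Real.sqrt t : ℝ) : ℂ) • v with hv'
    have hscale : ∀ M : Matrix (Fin d) (Fin d) ℂ,
        star v' ⬝ᵥ (M *ᵥ v') = (t : ℂ) * (star v ⬝ᵥ (M *ᵥ v)) := by
      intro M
      rw [hv', star_smul, Matrix.mulVec_smul, dotProduct_smul, smul_dotProduct, smul_smul]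
      rw [Complex.star_def, Complex.conj_ofReal, ← Complex.ofReal_mul,
        Real.mul_self_sqrt htpos.le, smul_eq_mul]
    set X : Matrix (Fin d) (Fin d) ℂ := vecMulVec v' (star v') with hX
    have hXpsd := outer_psd v'
    have hXtr : ∀ M : Matrix (Fin d) (Fin d) ℂ,
        (M * X).trace.re = t * (star v ⬝ᵥ (M *ᵥ v)).re := by
      intro M
      rw [hX, trace_mul_outer, hscale M]
      simp [Complex.mul_re]
    have hXσ : (σ * X).trace.re ≤ 1 := by
      rw [hXtr σ, ht, inv_mul_cancel₀ hσv0.ne']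
    have hmem : (ρ * X).trace.re ∈ B := ⟨X, hXpsd, hXσ, rfl⟩
    have hle := le_csSup hBbdd hmem
    rw [hXtr ρ] at hle
    have hgt : l < t * (star v ⬝ᵥ (ρ *ᵥ v)).re := by
      have h5 : l = t * (l * (star v ⬝ᵥ (σ *ᵥ v)).re) := by
        field_simp [ht]
        rw [ht, inv_mul_cancel₀ hσv0.ne']
      rw [h5]
      exact (mul_lt_mul_iff_right₀ htpos).mpr hv
    linarith
  linarith
end

section
/- Let $\rho, \sigma, \psi$ be positive semidefinite matrices on $\mathbb{C}^d$ with $\mathrm{tr}(\rho)=1$, $\mathrm{tr}(\psi) < 1$, and $\rho \leq \sigma + \psi$. Then there exists a positive semidefinite matrix $\tilde\rho$ with $\mathrm{tr}(\tilde\rho)=1$ such that $\tilde\rho \leq (1 - \mathrm{tr}(\psi))^{-1} \sigma$ and $F(\rho, \tilde\rho) \geq 1 - \mathrm{tr}(\psi)$, where $F(\rho,\tilde\rho) = \mathrm{tr}|\sqrt{\rho}\sqrt{\tilde\rho}|$ is the fidelity. -/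
open Matrix ComplexOrder

attribute [local instance] Classical.propDecidable

/-- The positive semidefinite square root of a positive semidefinite matrix
(the definition `Matrix.PosSemidef.sqrt` of the older Mathlib, since removed). -/
noncomputable def Matrix.PosSemidef.sqrt {n 𝕜 : Type*} [Fintype n] [DecidableEq n] [RCLike 𝕜]
    {A : Matrix n n 𝕜} (hA : A.PosSemidef) : Matrix n n 𝕜 :=
  hA.1.eigenvectorUnitary.1 * diagonal ((↑) ∘ (√·) ∘ hA.1.eigenvalues) *
  (star hA.1.eigenvectorUnitary : Matrix n n 𝕜)

/-- Fidelity of two positive semidefinite matrices: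
`F(ρ,τ) = tr √(√ρ τ √ρ)` (junk value `0` if an argument is not PSD). -/
noncomputable def fid {d : ℕ} (ρ τ : Matrix (Fin d) (Fin d) ℂ) : ℝ :=
  if h : ρ.PosSemidef ∧ τ.PosSemidef then
    ((h.2.mul_mul_conjTranspose_same h.1.sqrt).sqrt).trace.re
  else 0

theorem Matrix.PosSemidef.sqrt_mul_self {n : Type*} [Fintype n] [DecidableEq n]
    {A : Matrix n n ℂ} (hA : A.PosSemidef) : hA.sqrt * hA.sqrt = A := by
  have key : (star (hA.1.eigenvectorUnitary : Matrix n n ℂ)) *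
      (hA.1.eigenvectorUnitary : Matrix n n ℂ) = 1 :=
    Unitary.star_mul_self_of_mem (SetLike.coe_mem _)
  unfold Matrix.PosSemidef.sqrt
  conv_rhs => rw [hA.1.spectral_theorem, Unitary.conjStarAlgAut_apply]
  have rearr : ∀ (a b c d e f : Matrix n n ℂ),
      (a * b * c) * (d * e * f) = a * (b * (c * d) * e) * f := by
    intro a b c d e f; simp only [mul_assoc]
  rw [rearr, key, mul_one, diagonal_mul_diagonal]
  congr 3
  funext i
  simp only [Function.comp_apply, ← RCLike.ofReal_mul, Real.mul_self_sqrt (hA.eigenvalues_nonneg i)]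

theorem Matrix.PosSemidef.sq_sqrt {n : Type*} [Fintype n] [DecidableEq n]
    {A : Matrix n n ℂ} (hA : A.PosSemidef) : hA.sqrt ^ 2 = A := by
  rw [sq, hA.sqrt_mul_self]

theorem Matrix.PosSemidef.posSemidef_sqrt {n : Type*} [Fintype n] [DecidableEq n]
    {A : Matrix n n ℂ} (hA : A.PosSemidef) : hA.sqrt.PosSemidef := by
  unfold Matrix.PosSemidef.sqrt
  rw [show (star (hA.1.eigenvectorUnitary : Matrix n n ℂ)) =
      (hA.1.eigenvectorUnitary : Matrix n n ℂ)ᴴ from rfl]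
  apply Matrix.PosSemidef.mul_mul_conjTranspose_same
  refine posSemidef_diagonal_iff.mpr fun i => ?_
  rw [Function.comp_apply, Function.comp_apply]
  exact Complex.zero_le_real.mpr (Real.sqrt_nonneg _)

open scoped MatrixOrder in
theorem Matrix.PosSemidef.eq_sqrt_of_sq_eq {n : Type*} [Fintype n] [DecidableEq n]
    {A B : Matrix n n ℂ} (hB : B.PosSemidef) (hA : A.PosSemidef) (h : B ^ 2 = A) :
    B = hA.sqrt := by
  have h1 : CFC.sqrt A = B := (CFC.sqrt_eq_iff _ _ hA.nonneg hB.nonneg).mpr (by rw [← h, sq])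
  have h2 : CFC.sqrt A = hA.sqrt :=
    (CFC.sqrt_eq_iff _ _ hA.nonneg hA.posSemidef_sqrt.nonneg).mpr hA.sqrt_mul_self
  rw [← h1, h2]


set_option linter.unusedSectionVars false
set_option maxHeartbeats 2000000

namespace SmoothAux

variable {n : Type*} [Fintype n] [DecidableEq n]

lemma entry_nonneg {Z : Matrix n n ℂ} (hZ : Z.PosSemidef) (i : n) : 0 ≤ Z i i := by
  have h := hZ.dotProduct_mulVec_nonneg (Pi.single i 1)
  simpa [dotProduct, mulVec, Pi.single_apply, Finset.sum_ite_eq, apply_ite] using h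

lemma trace_nonneg' {Z : Matrix n n ℂ} (hZ : Z.PosSemidef) : 0 ≤ Z.trace := by
  unfold Matrix.trace
  exact Finset.sum_nonneg fun i _ => entry_nonneg hZ i

lemma trace_eq_re' {Z : Matrix n n ℂ} (hZ : Z.PosSemidef) : Z.trace = (Z.trace.re : ℂ) := by
  have h := trace_nonneg' hZ
  rw [Complex.le_def] at h
  exact Complex.ext rfl h.2.symm

lemma trace_mul_nonneg' {A B : Matrix n n ℂ} (hA : A.PosSemidef) (hB : B.PosSemidef) :
    0 ≤ (A * B).trace := by
  have h1 : A * B = hA.sqrt * (hA.sqrt * B) := by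
    rw [← mul_assoc, hA.sqrt_mul_self]
  rw [h1, trace_mul_comm]
  have h2 : hA.sqrt * B * hA.sqrt = hA.sqrt * B * hA.sqrtᴴ := by
    rw [hA.posSemidef_sqrt.1]
  rw [show hA.sqrt * B * hA.sqrt = hA.sqrt * B * hA.sqrtᴴ from h2]
  exact trace_nonneg' (hB.mul_mul_conjTranspose_same _)

lemma re_trace_mul_le' {A B C : Matrix n n ℂ} (hC : C.PosSemidef)
    (hAB : (B - A).PosSemidef) : ((A * C).trace).re ≤ ((B * C).trace).re := by
  have h := trace_mul_nonneg' hAB hC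
  rw [sub_mul] at h
  rw [Matrix.trace_sub] at h
  have := (Complex.le_def.mp h).1
  simp only [Complex.zero_re, Complex.sub_re] at this
  linarith

lemma psd_smul_real' {A : Matrix n n ℂ} (hA : A.PosSemidef) {c : ℝ} (hc : 0 ≤ c) :
    (c • A).PosSemidef := by
  refine Matrix.PosSemidef.of_dotProduct_mulVec_nonneg ?_ ?_
  · unfold Matrix.IsHermitian
    rw [conjTranspose_smul, hA.1]
    congr 1
  · intro x
    have h := hA.dotProduct_mulVec_nonneg x
    rw [Matrix.smul_mulVec, dotProduct_smul]
    have : (c : ℂ) • (star x ⬝ᵥ A *ᵥ x) = (c:ℂ) * (star x ⬝ᵥ A *ᵥ x) := rfl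
    rw [show ((c:ℝ) • (star x ⬝ᵥ A *ᵥ x) : ℂ) = (c:ℂ) * (star x ⬝ᵥ A *ᵥ x) by
      simp [Complex.real_smul]]
    exact mul_nonneg (by exact_mod_cast Complex.zero_le_real.mpr hc) h

lemma psd_eq_zero' {X : Matrix n n ℂ} (h1 : X.PosSemidef) (h2 : (-X).PosSemidef) : X = 0 := by
  have hv : ∀ v, X *ᵥ v = 0 := by
    intro v
    rw [← h1.dotProduct_mulVec_zero_iff]
    have a1 := h1.dotProduct_mulVec_nonneg v
    have a2 := h2.dotProduct_mulVec_nonneg v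
    rw [neg_mulVec, dotProduct_neg] at a2
    exact le_antisymm (neg_nonneg.mp a2) a1
  ext i j
  have := congrFun (hv (Pi.single j 1)) i
  simpa [mulVec, dotProduct, Pi.single_apply] using this

lemma sqrt_congr' {A B : Matrix n n ℂ} (h : A = B) (hA : A.PosSemidef) (hB : B.PosSemidef) :
    hA.sqrt = hB.sqrt := by subst h; rfl


lemma diag_congr {F G : n → ℂ} (h : ∀ i, F i = G i) : diagonal F = diagonal G :=
  congrArg Matrix.diagonal (funext h)

variable {A : Matrix n n ℂ} (hA : A.IsHermitian)

lemma cfc_mul' (f g : ℝ → ℝ) :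
    hA.cfc f * hA.cfc g = hA.cfc (fun x => f x * g x) := by
  unfold Matrix.IsHermitian.cfc
  simp only [Unitary.conjStarAlgAut_apply]
  have key : (star (Matrix.IsHermitian.eigenvectorUnitary hA : Matrix n n ℂ)) *
      (Matrix.IsHermitian.eigenvectorUnitary hA : Matrix n n ℂ) = 1 :=
    Unitary.star_mul_self_of_mem (SetLike.coe_mem _)
  have rearr : ∀ (a b c d e f : Matrix n n ℂ),
      (a * b * c) * (d * e * f) = a * (b * (c * d) * e) * f := by
    intro a b c d e f; simp only [mul_assoc]
  rw [rearr, key, mul_one, diagonal_mul_diagonal]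
  congr 2
  exact diag_congr fun i => by simp [Function.comp]

lemma cfc_herm' (f : ℝ → ℝ) : (hA.cfc f).IsHermitian := by
  unfold Matrix.IsHermitian Matrix.IsHermitian.cfc
  simp only [Unitary.conjStarAlgAut_apply]
  rw [conjTranspose_mul, conjTranspose_mul, diagonal_conjTranspose]
  simp only [star_star, ← star_eq_conjTranspose]
  rw [mul_assoc]
  congr 2
  exact diag_congr fun i => by simp [Pi.star_apply, Function.comp, Complex.conj_ofReal]

lemma cfc_psd' {hA' : A.PosSemidef} (f : ℝ → ℝ)
    (hf : ∀ x, 0 ≤ x → 0 ≤ f x) : (hA.cfc f).PosSemidef := by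
  unfold Matrix.IsHermitian.cfc
  simp only [Unitary.conjStarAlgAut_apply]
  rw [show (star (Matrix.IsHermitian.eigenvectorUnitary hA : Matrix n n ℂ)) =
      (Matrix.IsHermitian.eigenvectorUnitary hA : Matrix n n ℂ)ᴴ from rfl]
  apply Matrix.PosSemidef.mul_mul_conjTranspose_same
  refine posSemidef_diagonal_iff.mpr fun i => ?_
  rw [Function.comp_apply, Function.comp_apply]
  exact Complex.zero_le_real.mpr (hf _ (hA'.eigenvalues_nonneg i))

lemma cfc_id' : hA.cfc (fun x => x) = A := by
  conv_rhs => rw [hA.spectral_theorem]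
  rfl

lemma cfc_one' : hA.cfc (fun _ => 1) = 1 := by
  unfold Matrix.IsHermitian.cfc
  simp only [Unitary.conjStarAlgAut_apply]
  have : Matrix.diagonal (RCLike.ofReal ∘ (fun _ => (1:ℝ)) ∘ hA.eigenvalues) =
      (1 : Matrix n n ℂ) := by
    rw [← Matrix.diagonal_one]
    exact diag_congr fun i => by simp [Function.comp]
  rw [this, mul_one]
  exact Unitary.mul_star_self_of_mem (SetLike.coe_mem _)

lemma cfc_zero' : hA.cfc (fun _ => 0) = 0 := by
  unfold Matrix.IsHermitian.cfc
  simp only [Unitary.conjStarAlgAut_apply]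
  have : Matrix.diagonal (RCLike.ofReal ∘ (fun _ => (0:ℝ)) ∘ hA.eigenvalues) =
      (0 : Matrix n n ℂ) := by
    ext i j; by_cases h : i = j <;> simp [Matrix.diagonal_apply, h]
  rw [this, mul_zero, zero_mul]

lemma cfc_sub' (f g : ℝ → ℝ) :
    hA.cfc f - hA.cfc g = hA.cfc (fun x => f x - g x) := by
  unfold Matrix.IsHermitian.cfc
  simp only [Unitary.conjStarAlgAut_apply]
  rw [← sub_mul, ← mul_sub]
  congr 2
  ext i j
  by_cases h : i = j <;> simp [Matrix.diagonal_apply, h]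

lemma cfc_add' (f g : ℝ → ℝ) :
    hA.cfc f + hA.cfc g = hA.cfc (fun x => f x + g x) := by
  unfold Matrix.IsHermitian.cfc
  simp only [Unitary.conjStarAlgAut_apply]
  rw [← add_mul, ← mul_add]
  congr 2
  ext i j
  by_cases h : i = j <;> simp [Matrix.diagonal_apply, h]

lemma cfc_congr'' {f g : ℝ → ℝ} (h : ∀ i, f (hA.eigenvalues i) = g (hA.eigenvalues i)) :
    hA.cfc f = hA.cfc g := by
  unfold Matrix.IsHermitian.cfc
  simp only [Unitary.conjStarAlgAut_apply]
  congr 2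
  exact diag_congr fun i => by simp [Function.comp, h i]

lemma cfc_trace' (f : ℝ → ℝ) :
    (hA.cfc f).trace = ∑ i, ((f (hA.eigenvalues i) : ℝ) : ℂ) := by
  unfold Matrix.IsHermitian.cfc
  simp only [Unitary.conjStarAlgAut_apply]
  rw [trace_mul_comm, ← mul_assoc,
    Unitary.star_mul_self_of_mem (SetLike.coe_mem _), one_mul, trace_diagonal]
  rfl

lemma sqrt_eq_cfc' {hA' : A.PosSemidef} : hA'.sqrt = hA.cfc Real.sqrt := rfl


lemma cfc_mul_self {A : Matrix n n ℂ} (hA : A.IsHermitian) (f g : ℝ → ℝ) :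
    hA.cfc f * A * hA.cfc g = hA.cfc (fun x => f x * x * g x) := by
  have h : hA.cfc f * hA.cfc (fun x => x) * hA.cfc g = hA.cfc (fun x => f x * x * g x) := by
    rw [cfc_mul' hA, cfc_mul' hA]
  rwa [cfc_id' hA] at h

/-- the function whose cfc is the support projection -/
noncomputable def gproj (x : ℝ) : ℝ := if x = 0 then 0 else 1

/-- the function whose cfc is the pseudo-inverse square root -/
noncomputable def ginv (x : ℝ) : ℝ := if x = 0 then 0 else (Real.sqrt x)⁻¹

section support

variable {A : Matrix n n ℂ} (hA : A.PosSemidef)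

lemma gproj_nonneg : ∀ x : ℝ, 0 ≤ x → 0 ≤ gproj x := by
  intro x _; unfold gproj; split <;> norm_num

lemma proj_psd : (hA.1.cfc gproj).PosSemidef :=
  cfc_psd' hA.1 (hA' := hA) gproj gproj_nonneg

lemma one_sub_proj_psd : ((1 : Matrix n n ℂ) - hA.1.cfc gproj).PosSemidef := by
  rw [← cfc_one' hA.1, cfc_sub' hA.1]
  refine cfc_psd' hA.1 (hA' := hA) _ (fun x hx => ?_)
  unfold gproj; split <;> norm_num

lemma one_sub_proj_herm : ((1 : Matrix n n ℂ) - hA.1.cfc gproj).IsHermitian := by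
  rw [← cfc_one' hA.1, cfc_sub' hA.1]; exact cfc_herm' hA.1 _

lemma proj_conj_eq_zero :
    ((1 : Matrix n n ℂ) - hA.1.cfc gproj) * A * ((1 : Matrix n n ℂ) - hA.1.cfc gproj) = 0 := by
  rw [← cfc_one' hA.1, cfc_sub' hA.1, cfc_mul_self hA.1, ← cfc_zero' hA.1]
  apply cfc_congr'' hA.1
  intro i
  unfold gproj
  by_cases h : hA.1.eigenvalues i = 0 <;> simp [h]

/-- For `0 ≤ M ≤ A`, the support projection of `A` absorbs `√M` (from the left complement). -/
lemma compl_proj_mul_sqrt_eq_zero {M : Matrix n n ℂ} (hM : M.PosSemidef)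
    (hle : (A - M).PosSemidef) :
    ((1 : Matrix n n ℂ) - hA.1.cfc gproj) * hM.sqrt = 0 := by
  set E := (1 : Matrix n n ℂ) - hA.1.cfc gproj with hE
  have hEh : Eᴴ = E := one_sub_proj_herm hA
  have hX : E * M * E = (E * hM.sqrt) * (E * hM.sqrt)ᴴ := by
    rw [conjTranspose_mul, hEh, hM.posSemidef_sqrt.1]
    calc E * M * E = E * (hM.sqrt * hM.sqrt) * E := by rw [hM.sqrt_mul_self]
    _ = (E * hM.sqrt) * (hM.sqrt * E) := by simp only [mul_assoc]
  have hpsd : (E * M * E).PosSemidef := by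
    rw [hX]; exact posSemidef_self_mul_conjTranspose _
  have hneg : (-(E * M * E)).PosSemidef := by
    have h1 : (E * (A - M) * Eᴴ).PosSemidef := hle.mul_mul_conjTranspose_same E
    rw [hEh] at h1
    have h3 : E * A * E = 0 := by rw [hE]; exact proj_conj_eq_zero hA
    have h2 : E * (A - M) * E = -(E * M * E) := by
      have : E * (A - M) * E = E * A * E - E * M * E := by noncomm_ring
      rw [this, h3, zero_sub]
    rwa [h2] at h1
  have hz : E * M * E = 0 := psd_eq_zero' hpsd hneg
  rw [hX] at hz
  exact self_mul_conjTranspose_eq_zero.mp hz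

lemma proj_mul_sqrt {M : Matrix n n ℂ} (hM : M.PosSemidef) (hle : (A - M).PosSemidef) :
    hA.1.cfc gproj * hM.sqrt = hM.sqrt := by
  have h := compl_proj_mul_sqrt_eq_zero hA hM hle
  rw [sub_mul, one_mul] at h
  linear_combination (norm := module) -h

lemma sqrt_mul_proj {M : Matrix n n ℂ} (hM : M.PosSemidef) (hle : (A - M).PosSemidef) :
    hM.sqrt * hA.1.cfc gproj = hM.sqrt := by
  have h := congrArg conjTranspose (proj_mul_sqrt hA hM hle)
  rwa [conjTranspose_mul, hM.posSemidef_sqrt.1, (cfc_herm' hA.1 gproj)] at h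

lemma proj_mul_self {M : Matrix n n ℂ} (hM : M.PosSemidef) (hle : (A - M).PosSemidef) :
    hA.1.cfc gproj * M = M := by
  rw [← hM.sqrt_mul_self, ← mul_assoc, proj_mul_sqrt hA hM hle]

lemma self_mul_proj {M : Matrix n n ℂ} (hM : M.PosSemidef) (hle : (A - M).PosSemidef) :
    M * hA.1.cfc gproj = M := by
  rw [← hM.sqrt_mul_self, mul_assoc, sqrt_mul_proj hA hM hle]

end support

/-- monotonicity of the matrix square root, key eigenvalue argument -/
lemma sub_psd_of_sq_sub_sq {X Y : Matrix n n ℂ} (hX : X.PosSemidef) (hY : Y.PosSemidef)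
    (h : (Y * Y - X * X).PosSemidef) : (Y - X).PosSemidef := by
  have hC : (Y - X).IsHermitian := hY.1.sub hX.1
  apply hC.posSemidef_iff_eigenvalues_nonneg.mpr
  intro i
  show (0:ℝ) ≤ hC.eigenvalues i
  by_contra hneg
  push_neg at hneg
  set μ := hC.eigenvalues i with hμ
  set v : n → ℂ := ⇑(hC.eigenvectorBasis i) with hv
  have hvne : v ≠ 0 := by
    have := hC.eigenvectorBasis.orthonormal.ne_zero i
    intro hcon
    apply this
    ext j
    exact congrFun hcon j
  have heig : (Y - X) *ᵥ v = (μ : ℂ) • v := by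
    have := hC.mulVec_eigenvectorBasis i
    rw [← hv] at this
    rw [this]
    ext j
    simp [Pi.smul_apply, Complex.real_smul, hμ]
  -- expand Y*Y - X*X = Y*(Y-X) + (Y-X)*X
  have hexp : Y * Y - X * X = Y * (Y - X) + (Y - X) * X := by noncomm_ring
  have hq := h.dotProduct_mulVec_nonneg v
  rw [hexp] at hq
  rw [add_mulVec, dotProduct_add] at hq
  have t1 : star v ⬝ᵥ (Y * (Y - X)) *ᵥ v = (μ : ℂ) * (star v ⬝ᵥ Y *ᵥ v) := by
    rw [← mulVec_mulVec, heig, mulVec_smul, dotProduct_smul]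
    rfl
  have t2 : star v ⬝ᵥ ((Y - X) * X) *ᵥ v = (μ : ℂ) * (star v ⬝ᵥ X *ᵥ v) := by
    rw [← mulVec_mulVec, dotProduct_mulVec]
    have hsm : star v ᵥ* (Y - X) = (μ : ℂ) • star v := by
      have h1 : star ((Y - X)ᴴ *ᵥ v) = star v ᵥ* (Y - X) := by
        rw [star_mulVec, conjTranspose_conjTranspose]
      have h2 : (Y - X)ᴴ = Y - X := hC
      rw [h2, heig] at h1
      rw [← h1]
      ext j
      simp [Pi.smul_apply, star_smul, Complex.real_smul]
    rw [hsm, smul_dotProduct]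
    rfl
  rw [t1, t2] at hq
  have hqY := hY.dotProduct_mulVec_nonneg v
  have hqX := hX.dotProduct_mulVec_nonneg v
  set qY := star v ⬝ᵥ Y *ᵥ v
  set qX := star v ⬝ᵥ X *ᵥ v
  have hqYr : qY = (qY.re : ℂ) := Complex.ext rfl (Complex.le_def.mp hqY).2.symm
  have hqXr : qX = (qX.re : ℂ) := Complex.ext rfl (Complex.le_def.mp hqX).2.symm
  have hre := (Complex.le_def.mp hq).1
  rw [Complex.add_re, Complex.zero_re] at hre
  have e1 : ((μ:ℂ) * qY).re = μ * qY.re := by rw [Complex.re_ofReal_mul]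
  have e2 : ((μ:ℂ) * qX).re = μ * qX.re := by rw [Complex.re_ofReal_mul]
  rw [e1, e2] at hre
  have hYre : 0 ≤ qY.re := (Complex.le_def.mp hqY).1.trans_eq' (by simp)
  have hXre : 0 ≤ qX.re := (Complex.le_def.mp hqX).1.trans_eq' (by simp)
  have hzY : qY.re = 0 := by nlinarith
  have hzX : qX.re = 0 := by nlinarith
  have hYv : Y *ᵥ v = 0 := by
    rw [← hY.dotProduct_mulVec_zero_iff]
    show qY = 0
    rw [hqYr, hzY]; norm_num
  have hXv : X *ᵥ v = 0 := by
    rw [← hX.dotProduct_mulVec_zero_iff]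
    show qX = 0
    rw [hqXr, hzX]; norm_num
  have : (μ : ℂ) • v = 0 := by
    rw [← heig, sub_mulVec, hYv, hXv, sub_zero]
  rcases smul_eq_zero.mp this with h' | h'
  · exact absurd (Complex.ofReal_eq_zero.mp h') (by linarith)
  · exact hvne h'


lemma ginv_nonneg : ∀ x : ℝ, 0 ≤ x → 0 ≤ ginv x := by
  intro x _; unfold ginv; split <;> positivity

/-- `Re (tr M) ≤ tr √(M Mᴴ)` -/
lemma re_trace_le_re_trace_sqrt (M : Matrix n n ℂ) :
    (M.trace).re ≤ (((posSemidef_self_mul_conjTranspose M).sqrt).trace).re := by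
  set A := M * Mᴴ with hAdef
  set hA : A.PosSemidef := posSemidef_self_mul_conjTranspose M with hAproof
  set h : A.IsHermitian := hA.1
  set N := hA.sqrt with hNdef
  set S := h.cfc ginv with hSdef
  set P := h.cfc gproj with hPdef
  have evnn := hA.eigenvalues_nonneg
  have hNS : N * S = P := by
    rw [hNdef, sqrt_eq_cfc' h (hA' := hA), hSdef, cfc_mul' h]
    apply cfc_congr'' h
    intro i
    unfold ginv gproj
    by_cases hz : h.eigenvalues i = 0
    · simp [hz]
    · have hpos : 0 < h.eigenvalues i := lt_of_le_of_ne (evnn i) (Ne.symm hz)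
      simp only [if_neg hz]
      exact mul_inv_cancel₀ (by positivity)
  have hSAS : S * A * S = P := by
    rw [hSdef, cfc_mul_self h, hPdef]
    apply cfc_congr'' h
    intro i
    unfold ginv gproj
    by_cases hz : h.eigenvalues i = 0
    · simp [hz]
    · have hpos : 0 < h.eigenvalues i := lt_of_le_of_ne (evnn i) (Ne.symm hz)
      simp only [if_neg hz]
      have hs := Real.mul_self_sqrt (le_of_lt hpos)
      have hsne : Real.sqrt (h.eigenvalues i) ≠ 0 := by positivity
      field_simp
      rw [Real.sq_sqrt hpos.le]
  have hSh : Sᴴ = S := cfc_herm' h ginv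
  have hPM : P * M = M := by
    have hz : ((1 : Matrix n n ℂ) - P) * M = 0 := by
      have hconj : ((1 : Matrix n n ℂ) - P) * A * ((1 : Matrix n n ℂ) - P) = 0 :=
        proj_conj_eq_zero hA
      have hE : ((1 : Matrix n n ℂ) - P)ᴴ = (1 : Matrix n n ℂ) - P := one_sub_proj_herm hA
      have hfact : ((1 : Matrix n n ℂ) - P) * A * ((1 : Matrix n n ℂ) - P) =
          (((1 : Matrix n n ℂ) - P) * M) * (((1 : Matrix n n ℂ) - P) * M)ᴴ := by
        rw [conjTranspose_mul, hE, hAdef]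
        noncomm_ring
      rw [hfact] at hconj
      exact self_mul_conjTranspose_eq_zero.mp hconj
    have := sub_mul (1 : Matrix n n ℂ) P M
    rw [one_mul] at this
    rw [this] at hz
    linear_combination (norm := module) -hz
  set W := S * M with hWdef
  have hNW : N * W = M := by
    rw [hWdef, ← mul_assoc, hNS, hPM]
  have hWWH : W * Wᴴ = P := by
    rw [hWdef, conjTranspose_mul, hSh]
    calc S * M * (Mᴴ * S) = S * (M * Mᴴ) * S := by noncomm_ring
    _ = P := by rw [← hAdef, hSAS]
  have hT : ((1 : Matrix n n ℂ) + 1 - W - Wᴴ).PosSemidef := by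
    have hfact : (1 : Matrix n n ℂ) + 1 - W - Wᴴ =
        ((1 - W) * (1 - W)ᴴ) + ((1 : Matrix n n ℂ) - P) := by
      rw [conjTranspose_sub, conjTranspose_one]
      rw [show ((1 : Matrix n n ℂ) - W) * ((1 : Matrix n n ℂ) - Wᴴ) =
          1 - W - Wᴴ + W * Wᴴ by noncomm_ring, hWWH]
      noncomm_ring
    rw [hfact]
    exact (posSemidef_self_mul_conjTranspose _).add (one_sub_proj_psd hA)
  have hNpsd := hA.posSemidef_sqrt
  have key := trace_mul_nonneg' hNpsd hT
  have hexp : N * ((1 : Matrix n n ℂ) + 1 - W - Wᴴ) =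
      N + N - N * W - N * Wᴴ := by noncomm_ring
  rw [hexp] at key
  rw [trace_sub, trace_sub, trace_add, hNW] at key
  have hSN : S * N = P := by
    rw [hNdef, sqrt_eq_cfc' h (hA' := hA), hSdef, cfc_mul' h]
    apply cfc_congr'' h
    intro i
    unfold ginv gproj
    by_cases hz : h.eigenvalues i = 0
    · simp [hz]
    · have hpos : 0 < h.eigenvalues i := lt_of_le_of_ne (evnn i) (Ne.symm hz)
      simp only [if_neg hz]
      exact inv_mul_cancel₀ (by positivity)
  have hPh : Pᴴ = P := cfc_herm' h gproj
  have hMP : Mᴴ * P = Mᴴ := by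
    have hc := congrArg conjTranspose hPM
    rwa [conjTranspose_mul, hPh] at hc
  have hWH : Wᴴ = Mᴴ * S := by rw [hWdef, conjTranspose_mul, hSh]
  have htrNWH : (N * Wᴴ).trace = star (M.trace) := by
    rw [hWH, ← mul_assoc, trace_mul_cycle, hSN, trace_mul_comm, hMP, trace_conjTranspose]
  rw [htrNWH] at key
  have hre := (Complex.le_def.mp key).1
  simp only [Complex.zero_re, Complex.sub_re, Complex.add_re, Complex.star_def,
    Complex.conj_re] at hre
  show M.trace.re ≤ N.trace.re
  linarith

lemma conj_factor {B Δ ρ : Matrix n n ℂ} (hB : Bᴴ = B) (hBB : B * B = ρ) :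
    B * (Δ * ρ * Δᴴ) * Bᴴ = (B * Δ * B) * (B * Δ * B)ᴴ := by
  rw [← hBB]
  simp only [conjTranspose_mul, hB]
  noncomm_ring


end SmoothAux

open SmoothAux

/-- If `ρ ≤ σ + ψ` with `tr ρ = 1` and `tr ψ < 1`, then there is a state
`ρ' ≤ (1 - tr ψ)⁻¹ σ` with fidelity `F(ρ, ρ') ≥ 1 - tr ψ`. -/
theorem exists_state_le_of_le_add {d : ℕ} (ρ σ ψ : Matrix (Fin d) (Fin d) ℂ)
    (hρ : ρ.PosSemidef) (hσ : σ.PosSemidef) (hψ : ψ.PosSemidef)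
    (hρ1 : ρ.trace = 1) (hψ1 : ψ.trace.re < 1)
    (hle : (σ + ψ - ρ).PosSemidef) :
    ∃ ρ' : Matrix (Fin d) (Fin d) ℂ, ρ'.PosSemidef ∧ ρ'.trace = 1 ∧
      ((1 - ψ.trace.re)⁻¹ • σ - ρ').PosSemidef ∧
      1 - ψ.trace.re ≤ fid ρ ρ' := by
  set t : ℝ := ψ.trace.re with htdef
  have htpos : (0:ℝ) < 1 - t := by linarith
  have htnn : (0:ℝ) ≤ t := by
    have := (Complex.le_def.mp (trace_nonneg' hψ)).1
    simpa using this
  have hτ : (σ + ψ).PosSemidef := hσ.add hψ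
  have evnn : ∀ i, 0 ≤ hτ.1.eigenvalues i := hτ.eigenvalues_nonneg
  set S := hτ.1.cfc ginv with hSdef
  set P := hτ.1.cfc gproj with hPdef
  set Q := hτ.1.cfc Real.sqrt with hQdef
  have hSpsd : S.PosSemidef := cfc_psd' hτ.1 (hA' := hτ) ginv ginv_nonneg
  have hPpsd : P.PosSemidef := cfc_psd' hτ.1 (hA' := hτ) gproj gproj_nonneg
  have hQpsd : Q.PosSemidef := cfc_psd' hτ.1 (hA' := hτ) Real.sqrt
    (fun x _ => Real.sqrt_nonneg x)
  have h1Ppsd : ((1 : Matrix (Fin d) (Fin d) ℂ) - P).PosSemidef := one_sub_proj_psd hτ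
  have hSh : Sᴴ = S := cfc_herm' hτ.1 ginv
  have hPh : Pᴴ = P := cfc_herm' hτ.1 gproj
  have hQh : Qᴴ = Q := cfc_herm' hτ.1 Real.sqrt
  have hSTS : S * (σ + ψ) * S = P := by
    rw [hSdef, cfc_mul_self hτ.1, hPdef]
    apply cfc_congr'' hτ.1
    intro i
    unfold ginv gproj
    by_cases hz : hτ.1.eigenvalues i = 0
    · simp [hz]
    · have hpos : 0 < hτ.1.eigenvalues i := lt_of_le_of_ne (evnn i) (Ne.symm hz)
      have hs := Real.mul_self_sqrt (le_of_lt hpos)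
      have hsne : Real.sqrt (hτ.1.eigenvalues i) ≠ 0 := by positivity
      simp only [if_neg hz]
      field_simp
      rw [Real.sq_sqrt hpos.le]
  have hQS : Q * S = P := by
    rw [hQdef, hSdef, cfc_mul' hτ.1, hPdef]
    apply cfc_congr'' hτ.1
    intro i
    unfold ginv gproj
    by_cases hz : hτ.1.eigenvalues i = 0
    · simp [hz]
    · have hpos : 0 < hτ.1.eigenvalues i := lt_of_le_of_ne (evnn i) (Ne.symm hz)
      simp only [if_neg hz]
      exact mul_inv_cancel₀ (by positivity)
  have hSQ : S * Q = P := by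
    rw [hQdef, hSdef, cfc_mul' hτ.1, hPdef]
    apply cfc_congr'' hτ.1
    intro i
    unfold ginv gproj
    by_cases hz : hτ.1.eigenvalues i = 0
    · simp [hz]
    · have hpos : 0 < hτ.1.eigenvalues i := lt_of_le_of_ne (evnn i) (Ne.symm hz)
      simp only [if_neg hz]
      exact inv_mul_cancel₀ (by positivity)
  have hQQ : Q * Q = σ + ψ := by
    rw [hQdef, cfc_mul' hτ.1]
    have : hτ.1.cfc (fun x => Real.sqrt x * Real.sqrt x) = hτ.1.cfc (fun x => x) :=
      cfc_congr'' hτ.1 (fun i => Real.mul_self_sqrt (evnn i))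
    rw [this, cfc_id' hτ.1]
  have hσle : ((σ + ψ) - σ).PosSemidef := by simpa using hψ
  have hPρ : P * ρ = ρ := proj_mul_self hτ hρ hle
  have hρP : ρ * P = ρ := self_mul_proj hτ hρ hle
  have hPBσ : P * hσ.sqrt = hσ.sqrt := proj_mul_sqrt hτ hσ hσle
  have hBσP : hσ.sqrt * P = hσ.sqrt := sqrt_mul_proj hτ hσ hσle
  have hBσh : hσ.sqrtᴴ = hσ.sqrt := hσ.posSemidef_sqrt.1
  have hBσB : hσ.sqrt * hσ.sqrt = σ := hσ.sqrt_mul_self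
  set Δ : Matrix (Fin d) (Fin d) ℂ := hσ.sqrt * S with hΔdef
  have hΔH : Δᴴ = S * hσ.sqrt := by rw [hΔdef, conjTranspose_mul, hSh, hBσh]
  set ω := Δ * ρ * Δᴴ with hωdef
  have hωpsd : ω.PosSemidef := hρ.mul_mul_conjTranspose_same Δ
  -- Δ (σ+ψ) Δᴴ = σ
  have hΔτΔ : Δ * (σ + ψ) * Δᴴ = σ := by
    rw [hΔdef, hΔH]
    have e1 : hσ.sqrt * S * (σ + ψ) * (S * hσ.sqrt) =
        hσ.sqrt * (S * (σ + ψ) * S) * hσ.sqrt := by noncomm_ring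
    rw [e1, hSTS, hBσP, hBσB]
  -- σ - ω is PSD
  have hσω : (σ - ω).PosSemidef := by
    have h1 : (Δ * ((σ + ψ) - ρ) * Δᴴ).PosSemidef := hle.mul_mul_conjTranspose_same Δ
    have h2 : Δ * ((σ + ψ) - ρ) * Δᴴ = σ - ω := by
      have : Δ * ((σ + ψ) - ρ) * Δᴴ = Δ * (σ + ψ) * Δᴴ - Δ * ρ * Δᴴ := by noncomm_ring
      rw [this, hΔτΔ, hωdef]
    rwa [h2] at h1
  -- trace of ω
  have hΔΔ : Δᴴ * Δ = S * σ * S := by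
    rw [hΔdef, hΔH]
    have : S * hσ.sqrt * (hσ.sqrt * S) = S * (hσ.sqrt * hσ.sqrt) * S := by noncomm_ring
    rw [this, hBσB]
  have htrω : ω.trace = (ρ * (S * σ * S)).trace := by
    rw [hωdef, trace_mul_cycle, hΔΔ, trace_mul_comm]
  -- split of S τ S
  have hsplit : S * σ * S + S * ψ * S = P := by
    have : S * σ * S + S * ψ * S = S * (σ + ψ) * S := by noncomm_ring
    rw [this, hSTS]
  have hSψS : (S * ψ * S).PosSemidef := by
    have := hψ.mul_mul_conjTranspose_same S
    rwa [hSh] at this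
  have hSσS : (S * σ * S).PosSemidef := by
    have := hσ.mul_mul_conjTranspose_same S
    rwa [hSh] at this
  have htrρP : (ρ * P).trace = 1 := by rw [hρP, hρ1]
  -- tr(ρ SψS) ≤ t
  have hbσψ : ((ρ * (S * ψ * S)).trace).re ≤ ((σ + ψ) * (S * ψ * S)).trace.re :=
    re_trace_mul_le' hSψS hle
  have hτψtr : ((σ + ψ) * (S * ψ * S)).trace = (P * ψ).trace := by
    have e1 : (σ + ψ) * (S * ψ * S) = ((σ + ψ) * S * ψ) * S := by noncomm_ring
    rw [e1, trace_mul_comm]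
    have e2 : S * ((σ + ψ) * S * ψ) = (S * (σ + ψ) * S) * ψ := by noncomm_ring
    rw [e2, hSTS]
  have hPψ_le : ((P * ψ).trace).re ≤ t := by
    have h1 : ((P * ψ).trace).re ≤ ((1 * ψ : Matrix (Fin d) (Fin d) ℂ)).trace.re :=
      re_trace_mul_le' hψ h1Ppsd
    rwa [one_mul] at h1
  have hbound1 : ((ρ * (S * ψ * S)).trace).re ≤ t := by
    rw [hτψtr] at hbσψ
    linarith
  have hbound0 : (0:ℝ) ≤ ((ρ * (S * ψ * S)).trace).re := by
    have := (Complex.le_def.mp (trace_mul_nonneg' hρ hSψS)).1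
    simpa using this
  -- r = tr ω
  set r : ℝ := ω.trace.re with hrdef
  have hsum : (ρ * (S * σ * S)).trace + (ρ * (S * ψ * S)).trace = 1 := by
    rw [← trace_add, ← mul_add, hsplit, htrρP]
  have hrval : r = 1 - ((ρ * (S * ψ * S)).trace).re := by
    have := congrArg Complex.re hsum
    rw [Complex.add_re, Complex.one_re] at this
    rw [hrdef, htrω]
    linarith
  have hr_ge : 1 - t ≤ r := by rw [hrval]; linarith
  have hr_le : r ≤ 1 := by rw [hrval]; linarith
  have hrpos : 0 < r := by linarith
  have hrne : r ≠ 0 := ne_of_gt hrpos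
  have hrinv_nn : (0:ℝ) ≤ r⁻¹ := inv_nonneg.mpr (le_of_lt hrpos)
  -- the candidate state
  refine ⟨r⁻¹ • ω, psd_smul_real' hωpsd hrinv_nn, ?_, ?_, ?_⟩
  · rw [trace_smul, trace_eq_re' hωpsd, ← hrdef]
    rw [Complex.real_smul, ← Complex.ofReal_mul, inv_mul_cancel₀ hrne, Complex.ofReal_one]
  · -- (1-t)⁻¹ • σ - r⁻¹ • ω is PSD
    have hsplit2 : (1 - t)⁻¹ • σ - r⁻¹ • ω =
        (1 - t)⁻¹ • (σ - ω) + ((1 - t)⁻¹ - r⁻¹) • ω := by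
      rw [smul_sub, sub_smul]; abel
    rw [hsplit2]
    have hd1 : (0:ℝ) ≤ (1 - t)⁻¹ := inv_nonneg.mpr (le_of_lt htpos)
    have hd2 : (0:ℝ) ≤ (1 - t)⁻¹ - r⁻¹ := by
      have : r⁻¹ ≤ (1 - t)⁻¹ := by
        apply inv_anti₀ htpos hr_ge
      linarith
    exact (psd_smul_real' hσω hd1).add (psd_smul_real' hωpsd hd2)
  · -- fidelity bound
    have hDpsd : (Q - hσ.sqrt).PosSemidef := by
      apply sub_psd_of_sq_sub_sq hσ.posSemidef_sqrt hQpsd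
      rw [hQQ, hBσB]
      simpa using hψ
    set D := Q - hσ.sqrt with hDdef
    have hDh : Dᴴ = D := by rw [hDdef, conjTranspose_sub, hQh, hBσh]
    have hDDpsd : (D * D).PosSemidef := by
      have := posSemidef_conjTranspose_mul_self D
      rwa [hDh] at this
    set R := S * ρ * S with hRdef
    have hRpsd : R.PosSemidef := by
      have := hρ.mul_mul_conjTranspose_same S; rwa [hSh] at this
    have hRh : Rᴴ = R := hRpsd.1
    have hQRQ : Q * R * Q = ρ := by
      rw [hRdef]
      have e : Q * (S * ρ * S) * Q = (Q * S) * ρ * (S * Q) := by noncomm_ring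
      rw [e, hQS, hSQ, hPρ, hρP]
    have hone_sub_R : ((1 : Matrix (Fin d) (Fin d) ℂ) - R).PosSemidef := by
      have hPR : (P - R).PosSemidef := by
        have h0 := hle.mul_mul_conjTranspose_same S
        rw [hSh] at h0
        have e : S * (σ + ψ - ρ) * S = S * (σ + ψ) * S - S * ρ * S := by noncomm_ring
        rw [e, hSTS, ← hRdef] at h0
        exact h0
      have e2 : (1 : Matrix (Fin d) (Fin d) ℂ) - R = (1 - P) + (P - R) := by abel
      rw [e2]
      exact h1Ppsd.add hPR
    have htrRτ : (R * (σ + ψ)).trace = 1 := by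
      rw [hRdef]
      have e : (S * ρ * S) * (σ + ψ) = S * (ρ * (S * (σ + ψ))) := by noncomm_ring
      rw [e, trace_mul_comm]
      have e2 : (ρ * (S * (σ + ψ))) * S = ρ * (S * (σ + ψ) * S) := by noncomm_ring
      rw [e2, hSTS, htrρP]
    have htrRψ : (R * ψ).trace = (ρ * (S * ψ * S)).trace := by
      rw [hRdef]
      have e : (S * ρ * S) * ψ = S * (ρ * (S * ψ)) := by noncomm_ring
      rw [e, trace_mul_comm]
      have e2 : (ρ * (S * ψ)) * S = ρ * (S * ψ * S) := by noncomm_ring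
      rw [e2]
    have htrRDD_le : ((R * (D * D)).trace).re ≤ ((D * D).trace).re := by
      have h1 := re_trace_mul_le' hDDpsd hone_sub_R
      rwa [one_mul] at h1
    have htrBσD : 0 ≤ ((hσ.sqrt * D).trace) := trace_mul_nonneg' hσ.posSemidef_sqrt hDpsd
    have expand : D * D = ((σ + ψ) + σ - Q * hσ.sqrt) - hσ.sqrt * Q := by
      rw [hDdef]
      have e : (Q - hσ.sqrt) * (Q - hσ.sqrt)
          = Q * Q - Q * hσ.sqrt - hσ.sqrt * Q + hσ.sqrt * hσ.sqrt := by noncomm_ring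
      rw [e, hQQ, hBσB]; abel
    have htrDD_le : ((D * D).trace).re ≤ t := by
      have htrcomm : (Q * hσ.sqrt).trace = (hσ.sqrt * Q).trace := trace_mul_comm _ _
      have hBσDval : (hσ.sqrt * D).trace = (hσ.sqrt * Q).trace - σ.trace := by
        rw [hDdef, mul_sub, trace_sub, hBσB]
      have h1 : σ.trace.re ≤ ((hσ.sqrt * Q).trace).re := by
        have h2 := (Complex.le_def.mp htrBσD).1
        rw [hBσDval] at h2
        simp only [Complex.zero_re, Complex.sub_re] at h2
        linarith
      have hDDtr : ((D * D).trace).re = ((σ + ψ).trace).re + σ.trace.re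
          - ((Q * hσ.sqrt).trace).re - ((hσ.sqrt * Q).trace).re := by
        rw [expand, trace_sub, trace_sub, trace_add]
        simp [Complex.sub_re, Complex.add_re]
      have hτtr_re : ((σ + ψ).trace).re = σ.trace.re + t := by
        rw [trace_add, Complex.add_re]
      have hQBre : ((Q * hσ.sqrt).trace).re = ((hσ.sqrt * Q).trace).re := by rw [htrcomm]
      rw [hDDtr, hτtr_re]
      linarith
    -- tr(ρ Δ) = tr(R (Q Bσ))
    have htrρΔ : (ρ * Δ).trace = (R * (Q * hσ.sqrt)).trace := by
      have e0 : ρ * Δ = (Q * R * Q) * Δ := by rw [hQRQ]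
      rw [e0, hΔdef]
      have e1 : (Q * R * Q) * (hσ.sqrt * S) = Q * (R * (Q * hσ.sqrt) * S) := by noncomm_ring
      rw [e1, trace_mul_comm]
      have e2 : (R * (Q * hσ.sqrt) * S) * Q = R * (Q * hσ.sqrt) * (S * Q) := by
        rw [mul_assoc]
      rw [e2, hSQ]
      have e3 : R * (Q * hσ.sqrt) * P = R * (Q * (hσ.sqrt * P)) := by noncomm_ring
      rw [e3, hBσP]
    have hstar : star ((R * (Q * hσ.sqrt)).trace) = (R * (hσ.sqrt * Q)).trace := by
      rw [← trace_conjTranspose]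
      have e : (R * (Q * hσ.sqrt))ᴴ = (hσ.sqrt * Q) * R := by
        simp only [conjTranspose_mul, hRh, hQh, hBσh, mul_assoc]
      rw [e, trace_mul_comm]
    have hanti : Q * hσ.sqrt + hσ.sqrt * Q = (((σ + ψ) + (σ + ψ)) - ψ) - D * D := by
      rw [expand]; abel
    have htrsum : (R * (Q * hσ.sqrt)).trace + (R * (hσ.sqrt * Q)).trace
        = ((R * ((σ + ψ) + (σ + ψ))).trace - (R * ψ).trace) - (R * (D * D)).trace := by
      rw [← trace_add, ← mul_add, hanti, mul_sub, mul_sub, trace_sub, trace_sub]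
    have hRττ : (R * ((σ + ψ) + (σ + ψ))).trace = 2 := by
      rw [mul_add, trace_add, htrRτ]; norm_num
    rw [hRττ] at htrsum
    have hre := congrArg Complex.re htrsum
    simp only [Complex.add_re, Complex.sub_re] at hre
    have h2z : ((2:ℂ)).re = 2 := by norm_num
    rw [h2z] at hre
    have hsre : ((R * (hσ.sqrt * Q)).trace).re = ((R * (Q * hσ.sqrt)).trace).re := by
      rw [← hstar]
      exact Complex.conj_re _
    have hRψre : ((R * ψ).trace).re ≤ t := by
      rw [htrRψ]; exact hbound1
    have hkey : 1 - t ≤ ((ρ * Δ).trace).re := by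
      have hρΔre : ((ρ * Δ).trace).re = ((R * (Q * hσ.sqrt)).trace).re := by rw [htrρΔ]
      rw [hρΔre]
      linarith
    -- now the fidelity computation
    have hρ'psd : ((r⁻¹ : ℝ) • ω).PosSemidef := psd_smul_real' hωpsd hrinv_nn
    have hpair : ρ.PosSemidef ∧ ((r⁻¹ : ℝ) • ω).PosSemidef := ⟨hρ, hρ'psd⟩
    unfold fid
    rw [dif_pos hpair]
    set M := hρ.sqrt * Δ * hρ.sqrt with hMdef
    have hρh : hρ.sqrtᴴ = hρ.sqrt := hρ.posSemidef_sqrt.1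
    have hMMpsd := posSemidef_self_mul_conjTranspose M
    have hBωB : hρ.sqrt * ω * hρ.sqrtᴴ = M * Mᴴ := by
      rw [hωdef]
      exact conj_factor hρh hρ.sqrt_mul_self
    have hXeq : hρ.sqrt * (r⁻¹ • ω) * hρ.sqrtᴴ = (r⁻¹ : ℝ) • (M * Mᴴ) := by
      rw [Matrix.mul_smul, Matrix.smul_mul, hBωB]
    have hXpsd : ((r⁻¹ : ℝ) • (M * Mᴴ)).PosSemidef := psd_smul_real' hMMpsd hrinv_nn
    set c := Real.sqrt r⁻¹ with hcdef
    have hcnn : (0:ℝ) ≤ c := Real.sqrt_nonneg _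
    have hc2 : c * c = r⁻¹ := Real.mul_self_sqrt hrinv_nn
    have hcs_psd : ((c : ℝ) • hMMpsd.sqrt).PosSemidef :=
      psd_smul_real' hMMpsd.posSemidef_sqrt hcnn
    have hsq : ((c : ℝ) • hMMpsd.sqrt) ^ 2 = (r⁻¹ : ℝ) • (M * Mᴴ) := by
      rw [smul_pow, pow_two, hc2, hMMpsd.sq_sqrt]
    have hsqrtX : ((c : ℝ) • hMMpsd.sqrt) = hXpsd.sqrt :=
      hcs_psd.eq_sqrt_of_sq_eq hXpsd hsq
    show 1 - t ≤ ((hρ'psd.mul_mul_conjTranspose_same hρ.sqrt).sqrt).trace.re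
    rw [sqrt_congr' hXeq (hρ'psd.mul_mul_conjTranspose_same hρ.sqrt) hXpsd, ← hsqrtX,
      trace_smul]
    rw [Complex.real_smul, Complex.re_ofReal_mul]
    have habs : (M.trace).re ≤ ((hMMpsd.sqrt).trace).re := re_trace_le_re_trace_sqrt M
    have htrM : M.trace = (ρ * Δ).trace := by
      rw [hMdef, trace_mul_cycle, hρ.sqrt_mul_self]
    have hc1 : (1:ℝ) ≤ c := by
      have h1 : (1:ℝ) ≤ r⁻¹ := by
        have := mul_inv_cancel₀ hrne
        nlinarith
      calc (1:ℝ) = Real.sqrt 1 := (Real.sqrt_one).symm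
      _ ≤ c := Real.sqrt_le_sqrt h1
    have hMre : 1 - t ≤ (M.trace).re := by rw [htrM]; exact hkey
    have hTnn : (0:ℝ) ≤ ((hMMpsd.sqrt).trace).re := by linarith
    have : 1 * ((hMMpsd.sqrt).trace).re ≤ c * ((hMMpsd.sqrt).trace).re :=
      mul_le_mul_of_nonneg_right hc1 hTnn
    linarith
end

section
/- Let $P$ and $Q$ be probability distributions on a finite set with $Q(x)>0$ whenever $P(x)>0$, and let $\lambda > 0$, $1 < \alpha \leq 2$. Let $S = \{x : P(x) > \lambda Q(x)\}$. Then $\sum_{x \in S} (P(x) - \lambda Q(x)) \leq \lambda^{1-\alpha} \sum_x P(x)^{\alpha} Q(x)^{1-\alpha}$. -/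
/-- For probability distributions `P, Q` with `supp P ⊆ supp Q`, `λ > 0` and `1 < α ≤ 2`:
`∑_{x : P x > λ Q x} (P x - λ Q x) ≤ λ^{1-α} ∑_{x : P x > 0} P x ^ α Q x ^{1-α}`. -/
theorem sum_posPart_le_rpow_mul_sum {X : Type*} [Fintype X] (P Q : X → ℝ)
    (hP0 : ∀ x, 0 ≤ P x) (hQ0 : ∀ x, 0 ≤ Q x)
    (hP1 : ∑ x, P x = 1) (hQ1 : ∑ x, Q x = 1)
    (hsupp : ∀ x, 0 < P x → 0 < Q x)
    (l α : ℝ) (hl : 0 < l) (hα : 1 < α) (hα2 : α ≤ 2) :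
    ∑ x ∈ Finset.univ.filter (fun x => l * Q x < P x), (P x - l * Q x)
      ≤ l ^ (1 - α) *
        ∑ x ∈ Finset.univ.filter (fun x => 0 < P x), P x ^ α * Q x ^ (1 - α) := by
  have key : ∀ x ∈ Finset.univ.filter (fun x => l * Q x < P x),
      P x - l * Q x ≤ l ^ (1 - α) * (P x ^ α * Q x ^ (1 - α)) := by
    intro x hx
    rw [Finset.mem_filter] at hx
    have hlt : l * Q x < P x := hx.2
    have hQnn : 0 ≤ l * Q x := mul_nonneg hl.le (hQ0 x)
    have hPpos : 0 < P x := lt_of_le_of_lt hQnn hlt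
    have hQx : 0 < Q x := hsupp x hPpos
    have hQlt : Q x < P x / l := (lt_div_iff₀ hl).mpr (by linarith [mul_comm l (Q x)])
    have hmono : (P x / l) ^ (1 - α) ≤ Q x ^ (1 - α) :=
      Real.rpow_le_rpow_of_nonpos hQx hQlt.le (by linarith)
    have heq : l ^ (1 - α) * (P x ^ α * (P x / l) ^ (1 - α)) = P x := by
      rw [Real.div_rpow hPpos.le hl.le,
        show l ^ (1 - α) * (P x ^ α * (P x ^ (1 - α) / l ^ (1 - α)))
          = P x ^ α * P x ^ (1 - α) * (l ^ (1 - α) / l ^ (1 - α)) from by ring,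
        div_self (ne_of_gt (Real.rpow_pos_of_pos hl _)), mul_one,
        ← Real.rpow_add hPpos, show α + (1 - α) = 1 by ring, Real.rpow_one]
    calc P x - l * Q x ≤ P x := by linarith
      _ = l ^ (1 - α) * (P x ^ α * (P x / l) ^ (1 - α)) := heq.symm
      _ ≤ l ^ (1 - α) * (P x ^ α * Q x ^ (1 - α)) := by
          apply mul_le_mul_of_nonneg_left _ (Real.rpow_nonneg hl.le _)
          exact mul_le_mul_of_nonneg_left hmono (Real.rpow_nonneg hPpos.le _)
  calc ∑ x ∈ Finset.univ.filter (fun x => l * Q x < P x), (P x - l * Q x)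
      ≤ ∑ x ∈ Finset.univ.filter (fun x => l * Q x < P x),
          l ^ (1 - α) * (P x ^ α * Q x ^ (1 - α)) := Finset.sum_le_sum key
    _ = l ^ (1 - α) * ∑ x ∈ Finset.univ.filter (fun x => l * Q x < P x),
          P x ^ α * Q x ^ (1 - α) := by rw [Finset.mul_sum]
    _ ≤ l ^ (1 - α) * ∑ x ∈ Finset.univ.filter (fun x => 0 < P x),
          P x ^ α * Q x ^ (1 - α) := by
        apply mul_le_mul_of_nonneg_left _ (Real.rpow_nonneg hl.le _)
        apply Finset.sum_le_sum_of_subset_of_nonneg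
        · intro x hx
          rw [Finset.mem_filter] at hx ⊢
          exact ⟨hx.1, lt_of_le_of_lt (mul_nonneg hl.le (hQ0 x)) hx.2⟩
        · intro x _ _
          exact mul_nonneg (Real.rpow_nonneg (hP0 x) _) (Real.rpow_nonneg (hQ0 x) _)
end

section
/- Let $P, Q$ be probability distributions on a finite set with $Q(x)>0$ whenever $P(x)>0$, and suppose $P(x) \leq \lambda Q(x)$ for all $x$, for some $\lambda \geq 1$. Then the relative entropy variance satisfies $V(P\|Q) = \sum_x P(x)\big(\log \tfrac{P(x)}{Q(x)} - D(P\|Q)\big)^2 + D(P\|Q)^2 = \sum_x P(x)\big(\log\tfrac{P(x)}{Q(x)}\big)^2 \leq (\log 3 + \log\lambda)^2$. -/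
private lemma log_le_div_exp' {v : ℝ} (hv : 0 < v) : Real.log v ≤ v / Real.exp 1 := by
  have h := Real.log_le_sub_one_of_pos (x := v / Real.exp 1) (by positivity)
  have h2 : Real.log (v / Real.exp 1) = Real.log v - 1 := by
    rw [Real.log_div (ne_of_gt hv) (by positivity), Real.log_exp]
  rw [h2] at h; linarith

private lemma key_t_log_sq {t : ℝ} (ht : 0 < t) (ht1 : t ≤ 1) :
    t * (Real.log t) ^ 2 ≤ (Real.log 3) ^ 2 := by
  set u := Real.sqrt t with hu
  have hu0 : 0 < u := Real.sqrt_pos.mpr ht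
  have hu1 : u ≤ 1 := by
    rw [hu, show (1:ℝ) = Real.sqrt 1 by simp]
    exact Real.sqrt_le_sqrt ht1
  have hut : u ^ 2 = t := Real.sq_sqrt ht.le
  have hlogt : Real.log t = 2 * Real.log u := by
    rw [← hut, Real.log_pow]; push_cast; ring
  have hinv : Real.log u⁻¹ ≤ u⁻¹ / Real.exp 1 := log_le_div_exp' (by positivity)
  have hinv0 : 0 ≤ Real.log u⁻¹ := Real.log_nonneg (one_le_inv_iff₀.mpr ⟨hu0, hu1⟩)
  have hsq : (Real.log u) ^ 2 ≤ (u⁻¹ / Real.exp 1) ^ 2 := by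
    rw [show (Real.log u) ^ 2 = (Real.log u⁻¹) ^ 2 by rw [Real.log_inv]; ring]
    exact pow_le_pow_left₀ hinv0 hinv 2
  have h4e : t * (Real.log t) ^ 2 ≤ 4 / (Real.exp 1) ^ 2 := by
    have : t * (Real.log t) ^ 2 = 4 * (u ^ 2 * (Real.log u) ^ 2) := by
      rw [hlogt, hut]; ring
    rw [this]
    have := mul_le_mul_of_nonneg_left hsq (le_of_lt (pow_pos hu0 2))
    have huu : u ^ 2 * (u⁻¹) ^ 2 = 1 := by field_simp
    calc 4 * (u ^ 2 * (Real.log u) ^ 2) ≤ 4 * (u ^ 2 * (u⁻¹ / Real.exp 1) ^ 2) := by linarith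
      _ = 4 * ((u ^ 2 * (u⁻¹) ^ 2) / (Real.exp 1) ^ 2) := by rw [div_pow]; ring
      _ = 4 / (Real.exp 1) ^ 2 := by rw [huu]; ring
  have he2 : (2:ℝ) ≤ Real.exp 1 := by
    have := Real.exp_one_gt_d9; linarith
  have h41 : 4 / (Real.exp 1) ^ 2 ≤ 1 := by
    rw [div_le_one (by positivity)]; nlinarith
  have hlog3 : 1 ≤ Real.log 3 := by
    rw [Real.le_log_iff_exp_le (by norm_num)]
    have := Real.exp_one_lt_d9; linarith
  nlinarith

/-- If `P ≤ λ Q` pointwise with `λ ≥ 1`, the relative entropy variance satisfies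
`V(P‖Q) = ∑ P (log(P/Q) - D)² + D² = ∑ P (log(P/Q))² ≤ (log 3 + log λ)²`. -/
theorem relEntropyVariance_le {X : Type*} [Fintype X] (P Q : X → ℝ)
    (hP0 : ∀ x, 0 ≤ P x) (hQ0 : ∀ x, 0 ≤ Q x)
    (hP1 : ∑ x, P x = 1) (hQ1 : ∑ x, Q x = 1)
    (hsupp : ∀ x, 0 < P x → 0 < Q x)
    (l : ℝ) (hl : 1 ≤ l) (hle : ∀ x, P x ≤ l * Q x) :
    (∑ x ∈ Finset.univ.filter (fun x => 0 < P x),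
        P x * (Real.logb 2 (P x / Q x) -
          ∑ y ∈ Finset.univ.filter (fun y => 0 < P y), P y * Real.logb 2 (P y / Q y)) ^ 2)
      + (∑ y ∈ Finset.univ.filter (fun y => 0 < P y), P y * Real.logb 2 (P y / Q y)) ^ 2
      = ∑ x ∈ Finset.univ.filter (fun x => 0 < P x), P x * (Real.logb 2 (P x / Q x)) ^ 2
    ∧ ∑ x ∈ Finset.univ.filter (fun x => 0 < P x), P x * (Real.logb 2 (P x / Q x)) ^ 2
        ≤ (Real.logb 2 3 + Real.logb 2 l) ^ 2 := by
  classical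
  set S := Finset.univ.filter (fun x => 0 < P x) with hS
  set L : X → ℝ := fun x => Real.logb 2 (P x / Q x) with hLdef
  set D : ℝ := ∑ y ∈ S, P y * L y with hD
  have hPS : ∑ x ∈ S, P x = 1 := by
    rw [← hP1]
    refine Finset.sum_subset (Finset.filter_subset _ _) ?_
    intro x _ hx
    simp only [hS, Finset.mem_filter, Finset.mem_univ, true_and, not_lt] at hx
    linarith [hP0 x]
  have hQS : ∑ x ∈ S, Q x ≤ 1 := by
    rw [← hQ1]
    exact Finset.sum_le_sum_of_subset_of_nonneg (Finset.subset_univ S)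
      (fun x _ _ => hQ0 x)
  constructor
  · have expand : ∑ x ∈ S, P x * (L x - D) ^ 2
        = ∑ x ∈ S, (P x * (L x) ^ 2 - 2 * D * (P x * L x) + D ^ 2 * P x) :=
      Finset.sum_congr rfl (fun x _ => by ring)
    rw [expand, Finset.sum_add_distrib, Finset.sum_sub_distrib, ← Finset.mul_sum,
      ← Finset.mul_sum, hPS, ← hD]
    ring
  · set A := Real.logb 2 l with hA
    set B := Real.logb 2 3 with hB
    have hA0 : 0 ≤ A := Real.logb_nonneg (by norm_num) hl
    have hB0 : 0 ≤ B := Real.logb_nonneg (by norm_num) (by norm_num)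
    have hterm : ∀ x ∈ S, P x * (L x) ^ 2 ≤ P x * A ^ 2 + Q x * B ^ 2 := by
      intro x hx
      simp only [hS, Finset.mem_filter, Finset.mem_univ, true_and] at hx
      have hQx : 0 < Q x := hsupp x hx
      set t := P x / Q x with htdef
      have ht0 : 0 < t := div_pos hx hQx
      have htl : t ≤ l := (div_le_iff₀ hQx).mpr (by linarith [hle x, mul_comm l (Q x)])
      have hLx : L x = Real.logb 2 t := rfl
      rcases le_or_gt 1 t with h1t | ht1
      · -- t ≥ 1 : 0 ≤ logb t ≤ A
        have hlb0 : 0 ≤ Real.logb 2 t := Real.logb_nonneg (by norm_num) h1t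
        have hlbA : Real.logb 2 t ≤ A :=
          Real.logb_le_logb_of_le (by norm_num) ht0 htl
        have : (L x) ^ 2 ≤ A ^ 2 := by
          rw [hLx]; exact pow_le_pow_left₀ hlb0 hlbA 2
        nlinarith [mul_le_mul_of_nonneg_left this hx.le, mul_nonneg hQx.le (sq_nonneg B)]
      · -- t < 1
        have hkey : t * (Real.log t) ^ 2 ≤ (Real.log 3) ^ 2 := key_t_log_sq ht0 ht1.le
        have hlog2 : (0:ℝ) < Real.log 2 := Real.log_pos (by norm_num)
        have hlogb_sq : t * (Real.logb 2 t) ^ 2 ≤ B ^ 2 := by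
          rw [hB, Real.logb, Real.logb, div_pow, div_pow,
            show t * (Real.log t ^ 2 / Real.log 2 ^ 2)
              = (t * Real.log t ^ 2) / Real.log 2 ^ 2 by ring]
          gcongr
        have hPx : P x = Q x * t := by rw [htdef]; field_simp
        have : P x * (L x) ^ 2 = Q x * (t * (Real.logb 2 t) ^ 2) := by
          rw [hPx, hLx]; ring
        rw [this]
        have := mul_le_mul_of_nonneg_left hlogb_sq hQx.le
        nlinarith [mul_nonneg hx.le (sq_nonneg A)]
    calc ∑ x ∈ S, P x * (L x) ^ 2
        ≤ ∑ x ∈ S, (P x * A ^ 2 + Q x * B ^ 2) := Finset.sum_le_sum hterm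
      _ = (∑ x ∈ S, P x) * A ^ 2 + (∑ x ∈ S, Q x) * B ^ 2 := by
          rw [Finset.sum_add_distrib, ← Finset.sum_mul, ← Finset.sum_mul]
      _ ≤ A ^ 2 + B ^ 2 := by
          rw [hPS, one_mul]
          nlinarith [sq_nonneg B]
      _ ≤ (B + A) ^ 2 := by nlinarith
end

section
/- Let $\sigma$ be a positive semidefinite matrix with $m\, s(\sigma) \le \sigma \le M\, s(\sigma)$ for $0 < m < M$, where $s(\sigma)$ is the support projection. Let $\theta = \log M - \log m$ and let $l \geq 1$ be an integer. Then there exists a positive semidefinite matrix $\sigma'$ commuting with $\sigma$, with at most $l+1$ distinct nonzero eigenvalues, such that $2^{-\theta/l}\sigma \leq \sigma' \leq \sigma$. -/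
open Matrix ComplexOrder

/-- Spectrum truncation: if `m s(σ) ≤ σ ≤ M s(σ)` (with `s(σ)` the support projection,
given here as a projection `P` with `σ P = σ`), then for every integer `l ≥ 1` there is a
positive semidefinite `σ'` commuting with `σ`, with at most `l + 1` distinct nonzero
eigenvalues, such that `2^{-θ/l} σ ≤ σ' ≤ σ` where `θ = log M - log m`. -/
theorem exists_truncation {d : ℕ} (σ P : Matrix (Fin d) (Fin d) ℂ)
    (hσ : σ.PosSemidef) (hP : P.IsHermitian) (hPproj : P * P = P)
    (hPsupp : σ * P = σ)
    (m M : ℝ) (hm : 0 < m) (hmM : m < M)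
    (hlow : (σ - m • P).PosSemidef) (hup : (M • P - σ).PosSemidef)
    (l : ℕ) (hl : 1 ≤ l) :
    ∃ (σ' : Matrix (Fin d) (Fin d) ℂ) (h' : σ'.PosSemidef),
      σ' * σ = σ * σ' ∧
      {μ : ℝ | μ ≠ 0 ∧ ∃ i, h'.1.eigenvalues i = μ}.ncard ≤ l + 1 ∧
      (σ' - ((2 : ℝ) ^ (-((Real.logb 2 M - Real.logb 2 m) / (l : ℝ)))) • σ).PosSemidef ∧
      (σ - σ').PosSemidef := by
  classical
  set r : ℝ := (Real.logb 2 M - Real.logb 2 m) / (l : ℝ) with hrdef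
  set c : ℝ := (2 : ℝ) ^ (-r) with hcdef
  have hM : (0:ℝ) < M := hm.trans hmM
  have hθ : 0 < Real.logb 2 M - Real.logb 2 m :=
    sub_pos.mpr (Real.logb_lt_logb (by norm_num) hm hmM)
  have hl0 : (0:ℝ) < (l:ℝ) := by exact_mod_cast hl
  have hr : 0 < r := div_pos hθ hl0
  -- the rounding function
  set f : ℝ → ℝ := fun x => if x ≤ 0 then 0 else
    (2:ℝ) ^ (r * ((⌊Real.logb 2 x / r⌋ : ℤ) : ℝ)) with hfdef
  have hfnonneg : ∀ x, 0 ≤ f x := by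
    intro x
    by_cases h : x ≤ 0
    · simp [hfdef, h]
    · simp only [hfdef, h, if_false]
      positivity
  have hfle : ∀ x, 0 < x → f x ≤ x := by
    intro x hx
    have hy : (2:ℝ) ^ (Real.logb 2 x) = x := Real.rpow_logb (by norm_num) (by norm_num) hx
    simp only [hfdef, not_le.mpr hx, if_false]
    calc (2:ℝ) ^ (r * ((⌊Real.logb 2 x / r⌋ : ℤ) : ℝ))
        ≤ (2:ℝ) ^ (Real.logb 2 x) := by
          apply Real.rpow_le_rpow_of_exponent_le (by norm_num)
          have h1 : ((⌊Real.logb 2 x / r⌋ : ℤ) : ℝ) ≤ Real.logb 2 x / r := Int.floor_le _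
          calc r * ((⌊Real.logb 2 x / r⌋ : ℤ) : ℝ) ≤ r * (Real.logb 2 x / r) :=
                mul_le_mul_of_nonneg_left h1 hr.le
            _ = Real.logb 2 x := by field_simp
      _ = x := hy
  have hfge : ∀ x, 0 < x → c * x ≤ f x := by
    intro x hx
    have hy : (2:ℝ) ^ (Real.logb 2 x) = x := Real.rpow_logb (by norm_num) (by norm_num) hx
    simp only [hfdef, not_le.mpr hx, if_false, hcdef]
    have h1 : Real.logb 2 x / r - 1 < ((⌊Real.logb 2 x / r⌋ : ℤ) : ℝ) := Int.sub_one_lt_floor _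
    calc (2:ℝ) ^ (-r) * x = (2:ℝ) ^ (-r + Real.logb 2 x) := by
          rw [Real.rpow_add (by norm_num), hy]
      _ ≤ (2:ℝ) ^ (r * ((⌊Real.logb 2 x / r⌋ : ℤ) : ℝ)) := by
          apply Real.rpow_le_rpow_of_exponent_le (by norm_num)
          have h2 : r * (Real.logb 2 x / r - 1) < r * ((⌊Real.logb 2 x / r⌋ : ℤ) : ℝ) :=
            mul_lt_mul_of_pos_left h1 hr
          have h3 : r * (Real.logb 2 x / r - 1) = -r + Real.logb 2 x := by
            field_simp; ring
          linarith
  -- eigenvalue bounds for σ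
  set ev : Fin d → ℝ := hσ.1.eigenvalues with hevdef
  have hev : ∀ i, ev i = 0 ∨ (m ≤ ev i ∧ ev i ≤ M) := by
    intro i
    by_cases h0 : ev i = 0
    · exact Or.inl h0
    right
    set v : Fin d → ℂ := ⇑(hσ.1.eigenvectorBasis i) with hvdef
    have hσv : σ *ᵥ v = ev i • v := hσ.1.mulVec_eigenvectorBasis i
    have hPσ : P * σ = σ := by
      have := congrArg conjTranspose hPsupp
      rwa [conjTranspose_mul, hP.eq, hσ.1.eq] at this
    have hPv : P *ᵥ v = v := by
      have h1 : P *ᵥ (σ *ᵥ v) = σ *ᵥ v := by rw [mulVec_mulVec, hPσ]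
      rw [hσv, mulVec_smul] at h1
      exact smul_right_injective (Fin d → ℂ) h0 h1
    have hvv : star v ⬝ᵥ v = 1 := by
      have h2 : (inner ℂ (hσ.1.eigenvectorBasis i) (hσ.1.eigenvectorBasis i) : ℂ) = 1 := by
        rw [inner_self_eq_norm_sq_to_K]
        simp [hσ.1.eigenvectorBasis.orthonormal.1 i]
      rw [EuclideanSpace.inner_eq_star_dotProduct] at h2
      simpa [dotProduct, mul_comm] using h2
    constructor
    · have h3 := hlow.dotProduct_mulVec_nonneg v
      have h4 : (σ - m • P) *ᵥ v = ((ev i - m : ℝ) : ℂ) • v := by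
        rw [sub_mulVec, smul_mulVec, hPv, hσv]
        ext j
        simp [Complex.real_smul]
        ring
      rw [h4, dotProduct_smul, hvv, smul_eq_mul, mul_one] at h3
      have := Complex.zero_le_real.mp h3
      linarith
    · have h3 := hup.dotProduct_mulVec_nonneg v
      have h4 : (M • P - σ) *ᵥ v = ((M - ev i : ℝ) : ℂ) • v := by
        rw [sub_mulVec, smul_mulVec, hPv, hσv]
        ext j
        simp [Complex.real_smul]
        ring
      rw [h4, dotProduct_smul, hvv, smul_eq_mul, mul_one] at h3
      have := Complex.zero_le_real.mp h3
      linarith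
  -- the construction
  set U : Matrix.unitaryGroup (Fin d) ℂ := hσ.1.eigenvectorUnitary with hUdef
  set Uc : Matrix (Fin d) (Fin d) ℂ := (U : Matrix (Fin d) (Fin d) ℂ) with hUcdef
  set D : Matrix (Fin d) (Fin d) ℂ := diagonal (RCLike.ofReal ∘ ev) with hDdef
  set D' : Matrix (Fin d) (Fin d) ℂ := diagonal (fun i => ((f (ev i) : ℝ) : ℂ)) with hD'def
  set σ' : Matrix (Fin d) (Fin d) ℂ := Uc * D' * star Uc with hσ'def
  have hspec : σ = Uc * D * star Uc := hσ.1.spectral_theorem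
  have hUU : star Uc * Uc = 1 := Unitary.coe_star_mul_self U
  have hD'psd : D'.PosSemidef := by
    refine posSemidef_diagonal_iff.mpr fun i => ?_
    exact_mod_cast Complex.zero_le_real.mpr (hfnonneg (ev i))
  have h' : σ'.PosSemidef := by
    rw [hσ'def, Matrix.star_eq_conjTranspose]
    exact hD'psd.mul_mul_conjTranspose_same _
  refine ⟨σ', h', ?_, ?_, ?_, ?_⟩
  · -- commutation
    have conjmul : ∀ E F : Matrix (Fin d) (Fin d) ℂ,
        (Uc * E * star Uc) * (Uc * F * star Uc) = Uc * (E * F) * star Uc := by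
      intro E F
      simp only [Matrix.mul_assoc]
      rw [← Matrix.mul_assoc (star Uc) Uc _, hUU, Matrix.one_mul]
    rw [hσ'def, hspec, conjmul, conjmul, hDdef, hD'def, diagonal_mul_diagonal,
      diagonal_mul_diagonal]
    congr 2
    ext i
    simp [mul_comm]
  · -- eigenvalue count
    set k0 : ℤ := ⌊Real.logb 2 m / r⌋ with hk0def
    set S : Set ℝ := (fun k : ℤ => (2:ℝ) ^ (r * (k:ℝ))) '' (Set.Icc k0 (k0 + l)) with hSdef
    have hsub : {μ : ℝ | μ ≠ 0 ∧ ∃ i, h'.1.eigenvalues i = μ} ⊆ S := by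
      rintro μ ⟨hμ0, i, hi⟩
      have h1 : (μ : ℂ) ∈ spectrum ℂ σ' := by
        have h2 := h'.1.eigenvalues_mem_spectrum_real i
        rw [hi] at h2
        simpa using spectrum.algebraMap_mem ℂ h2
      rw [hσ'def, hUcdef, Unitary.spectrum_star_right_conjugate, hD'def, spectrum_diagonal] at h1
      obtain ⟨j, hj⟩ := h1
      have hj' : ((f (ev j) : ℝ) : ℂ) = (μ : ℂ) := hj
      have hμval : f (ev j) = μ := by exact_mod_cast hj'
      have hevj : ¬ ev j ≤ 0 := by
        intro hle
        rcases hev j with h0 | ⟨h1', _⟩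
        · rw [← hμval, hfdef] at hμ0
          simp [h0] at hμ0
        · linarith
      have hx : 0 < ev j := not_le.mp hevj
      rcases hev j with h0 | ⟨hmx, hxM⟩
      · exact absurd h0.le hevj
      refine ⟨⌊Real.logb 2 (ev j) / r⌋, ?_, ?_⟩
      · constructor
        · apply Int.floor_le_floor
          have hlog : Real.logb 2 m ≤ Real.logb 2 (ev j) :=
            Real.logb_le_logb_of_le (by norm_num) hm hmx
          exact (div_le_div_iff_of_pos_right hr).mpr hlog
        · have h5 : Real.logb 2 (ev j) / r ≤ Real.logb 2 m / r + l := by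
            have h6 : Real.logb 2 (ev j) ≤ Real.logb 2 M :=
              Real.logb_le_logb_of_le (by norm_num) hx hxM
            have h7 : Real.logb 2 M = Real.logb 2 m + r * l := by
              rw [hrdef]; field_simp; ring
            calc Real.logb 2 (ev j) / r ≤ (Real.logb 2 m + r * l) / r := by
                  apply (div_le_div_iff_of_pos_right hr).mpr; linarith
              _ = Real.logb 2 m / r + l := by
                  rw [add_div, mul_comm, mul_div_assoc, div_self hr.ne', mul_one]
          have h8 := Int.floor_le_floor h5
          rwa [Int.floor_add_natCast] at h8
      · rw [← hμval]
        simp only [hfdef, hevj, if_false]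
    calc {μ : ℝ | μ ≠ 0 ∧ ∃ i, h'.1.eigenvalues i = μ}.ncard
        ≤ S.ncard := Set.ncard_le_ncard hsub ((Set.finite_Icc _ _).image _)
      _ ≤ (Set.Icc k0 (k0 + (l:ℤ))).ncard := Set.ncard_image_le (Set.finite_Icc _ _)
      _ = l + 1 := by
          rw [← Finset.coe_Icc, Set.ncard_coe_finset, Int.card_Icc]
          omega
  · -- σ' - c • σ
    have e1 : σ' - c • σ
        = Uc * diagonal (fun i => ((f (ev i) - c * ev i : ℝ) : ℂ)) * star Uc := by
      rw [hσ'def, hspec, ← Matrix.smul_mul, ← Matrix.mul_smul, ← Matrix.sub_mul, ← Matrix.mul_sub]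
      congr 2
      rw [hD'def, hDdef, ← diagonal_smul, diagonal_sub]
      congr 1
      ext i
      simp [Complex.real_smul]
    rw [e1, Matrix.star_eq_conjTranspose]
    refine (posSemidef_diagonal_iff.mpr fun i => ?_).mul_mul_conjTranspose_same _
    refine (Complex.real_le_real ..).mpr ?_
    rcases hev i with h0 | ⟨hmx, _⟩
    · rw [h0]
      simp [hfnonneg 0, hfdef]
    · have hx : 0 < ev i := lt_of_lt_of_le hm hmx
      linarith [hfge (ev i) hx]
  · -- σ - σ'
    have e1 : σ - σ'
        = Uc * diagonal (fun i => ((ev i - f (ev i) : ℝ) : ℂ)) * star Uc := by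
      rw [hσ'def, hspec, ← Matrix.sub_mul, ← Matrix.mul_sub]
      congr 2
      rw [hD'def, hDdef, diagonal_sub]
      congr 1
      ext i
      simp
    rw [e1, Matrix.star_eq_conjTranspose]
    refine (posSemidef_diagonal_iff.mpr fun i => ?_).mul_mul_conjTranspose_same _
    refine (Complex.real_le_real ..).mpr ?_
    rcases hev i with h0 | ⟨hmx, _⟩
    · rw [h0]
      simp [hfdef]
    · have hx : 0 < ev i := lt_of_lt_of_le hm hmx
      linarith [hfle (ev i) hx]
end
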